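/- arXiv:2002.09028 — 7 statements merged into one kernel-verified Lean document; each statement's English description precedes it below -/
import Mathlib

section
/- Let G be a finite simple graph, X a set of vertices of G, r a natural number, and x, y two vertices not in X with equal r-projection profiles onto X, i.e. π^r_{G,X}[x] = π^r_{G,X}[y]. Then for every v ∈ X and every natural number d ≤ r, there is a walk of length at most d from x to v in G if and only if there is a walk of length at most d from y to v in G. In particular N^d_G[x] ∩ X = N^d_G[y] ∩ X for every d ≤ r. -/
def SimpleGraph.Walk.AvoidsInternally {V : Type*} {G : SimpleGraph V} {u v : V}
    (w : G.Walk u v) (X : Set V) : Prop :=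
  ∀ x ∈ w.support.tail.dropLast, x ∉ X

noncomputable def avoidDist {V : Type*} (G : SimpleGraph V) (X : Set V) (u v : V) : ℕ∞ :=
  sInf {n : ℕ∞ | ∃ w : G.Walk u v, w.AvoidsInternally X ∧ (w.length : ℕ∞) = n}

noncomputable def projProfile {V : Type*} (G : SimpleGraph V) (X : Set V) (r : ℕ)
    (u v : V) : ℕ∞ :=
  if avoidDist G X u v ≤ (r : ℕ∞) then avoidDist G X u v else ⊤

lemma mem_dropLast_cons' {α : Type*} {t b : α} {l : List α} (h : t ∈ (b :: l).dropLast) :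
    t = b ∨ t ∈ l.dropLast := by
  cases l with
  | nil => simp at h
  | cons c l => rw [List.dropLast_cons₂] at h; simpa using h

lemma decompose {V : Type*} {G : SimpleGraph V} {X : Set V} :
    ∀ {x v : V} (w : G.Walk x v), x ∉ X → v ∈ X →
      ∃ v' ∈ X, ∃ p : G.Walk x v', ∃ q : G.Walk v' v,
        p.AvoidsInternally X ∧ p.length + q.length ≤ w.length := by
  intro x v w
  induction w with
  | nil => exact fun hx hv => absurd hv hx
  | @cons a b c h p ih =>
    intro hx hv
    by_cases hb : b ∈ X
    · refine ⟨b, hb, .cons h .nil, p, ?_, by simp [Nat.add_comm]⟩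
      intro t ht
      simp [SimpleGraph.Walk.AvoidsInternally, SimpleGraph.Walk.support_cons] at ht
    · obtain ⟨v', hv', p', q, hav, hlen⟩ := ih hb hv
      refine ⟨v', hv', .cons h p', q, ?_, ?_⟩
      · intro t ht
        rw [SimpleGraph.Walk.support_cons, List.tail_cons] at ht
        rw [p'.support_eq_cons] at ht
        rcases mem_dropLast_cons' ht with rfl | ht'
        · exact hb
        · exact hav t (by rwa [p'.support_eq_cons, List.tail_cons])
      · simp only [SimpleGraph.Walk.length_cons]; omega

lemma avoidDist_le_iff {V : Type*} {G : SimpleGraph V} {X : Set V} {u v : V} {n : ℕ} :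
    avoidDist G X u v ≤ (n : ℕ∞) ↔
      ∃ w : G.Walk u v, w.AvoidsInternally X ∧ w.length ≤ n := by
  constructor
  · intro hS
    have hne : ¬ (((n + 1 : ℕ) : ℕ∞) ≤ avoidDist G X u v) := by
      intro h
      have := h.trans hS
      exact (Nat.cast_le.mp this).not_gt (Nat.lt_succ_self n)
    rw [avoidDist, le_sInf_iff] at hne
    push_neg at hne
    obtain ⟨m, ⟨w, hav, hlen⟩, hm⟩ := hne
    refine ⟨w, hav, ?_⟩
    rw [← hlen] at hm
    exact_mod_cast Nat.lt_succ_iff.mp (by exact_mod_cast hm)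
  · rintro ⟨w, hav, hlen⟩
    calc avoidDist G X u v ≤ (w.length : ℕ∞) := sInf_le ⟨w, hav, rfl⟩
    _ ≤ (n : ℕ∞) := by exact_mod_cast hlen

lemma transfer {V : Type*} {G : SimpleGraph V} {X : Set V} {r : ℕ} {x y : V}
    (hx : x ∉ X)
    (hprof : ∀ v ∈ X, projProfile G X r x v = projProfile G X r y v) :
    ∀ v ∈ X, ∀ d ≤ r, (∃ w : G.Walk x v, w.length ≤ d) → (∃ w : G.Walk y v, w.length ≤ d) := by
  rintro v hv d hd ⟨w, hw⟩
  obtain ⟨v', hv', p, q, hav, hlen⟩ := decompose w hx hv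
  have h1 : avoidDist G X x v' ≤ (p.length : ℕ∞) := sInf_le ⟨p, hav, rfl⟩
  have h2 : avoidDist G X x v' ≤ (r : ℕ∞) :=
    h1.trans (by exact_mod_cast le_trans (by omega) hd)
  have hp := hprof v' hv'
  rw [projProfile, projProfile, if_pos h2] at hp
  have h3 : avoidDist G X y v' ≤ (r : ℕ∞) := by
    by_contra hcon
    rw [if_neg hcon] at hp
    rw [hp] at h2; simp at h2
  rw [if_pos h3] at hp
  have h4 : avoidDist G X y v' ≤ (p.length : ℕ∞) := hp ▸ h1
  obtain ⟨p', _, hp'⟩ := avoidDist_le_iff.mp h4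
  refine ⟨p'.append q, ?_⟩
  rw [SimpleGraph.Walk.length_append]
  omega

/-- If `x, y ∉ X` have equal `r`-projection profiles onto `X`, then for
every `v ∈ X` and every `d ≤ r` there is a walk of length at most `d` from `x` to `v`
iff there is one from `y` to `v`; in particular `N^d_G[x] ∩ X = N^d_G[y] ∩ X`
for every `d ≤ r`. -/
theorem equal_profiles_equal_neighbourhoods {V : Type*} [Fintype V]
    (G : SimpleGraph V) (X : Set V) (r : ℕ) (x y : V)
    (hx : x ∉ X) (hy : y ∉ X)
    (hprof : ∀ v ∈ X, projProfile G X r x v = projProfile G X r y v) :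
    (∀ v ∈ X, ∀ d ≤ r,
      ((∃ w : G.Walk x v, w.length ≤ d) ↔ (∃ w : G.Walk y v, w.length ≤ d))) ∧
    (∀ d ≤ r,
      {u : V | ∃ w : G.Walk u x, w.length ≤ d} ∩ X
        = {u : V | ∃ w : G.Walk u y, w.length ≤ d} ∩ X) := by
  have hprof' : ∀ v ∈ X, projProfile G X r y v = projProfile G X r x v :=
    fun v hv => (hprof v hv).symm
  have main : ∀ v ∈ X, ∀ d ≤ r,
      ((∃ w : G.Walk x v, w.length ≤ d) ↔ (∃ w : G.Walk y v, w.length ≤ d)) :=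
    fun v hv d hd => ⟨transfer hx hprof v hv d hd, transfer hy hprof' v hv d hd⟩
  refine ⟨main, fun d hd => ?_⟩
  ext u
  simp only [Set.mem_inter_iff, Set.mem_setOf_eq]
  constructor
  · rintro ⟨⟨w, hw⟩, hu⟩
    obtain ⟨w', hw'⟩ := (main u hu d hd).mp ⟨w.reverse, by simpa using hw⟩
    exact ⟨⟨w'.reverse, by simpa using hw'⟩, hu⟩
  · rintro ⟨⟨w, hw⟩, hu⟩
    obtain ⟨w', hw'⟩ := (main u hu d hd).mpr ⟨w.reverse, by simpa using hw⟩
    exact ⟨⟨w'.reverse, by simpa using hw'⟩, hu⟩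
end

section
/- Let G be a finite simple graph, r a natural number, and R, C disjoint sets of vertices of G such that: (i) for every vertex u ∉ R, at most one element of C admits a walk of length at most 2r to u in the graph G − R (i.e. C is 2r-scattered in G − R); and (ii) all elements of C have the same r-projection profile onto R. If a vertex s of G is within distance r (in G) of two distinct elements of C, then s is within distance r (in G) of every element of C. -/
lemma tail_dropLast_eq {α : Type*} (l : List α) : l.tail.dropLast = l.dropLast.tail := by
  cases l with
  | nil => simp
  | cons a rest => cases rest <;> simp

lemma avoidDist_le {V : Type*} {G : SimpleGraph V} {X : Set V} {u v : V}
    (w : G.Walk u v) (hw : w.AvoidsInternally X) : avoidDist G X u v ≤ w.length :=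
  sInf_le ⟨w, hw, rfl⟩

lemma exists_walk_of_avoidDist_le {V : Type*} {G : SimpleGraph V} {X : Set V} {u v : V}
    {n : ℕ} (h : avoidDist G X u v ≤ (n : ℕ∞)) :
    ∃ w : G.Walk u v, w.AvoidsInternally X ∧ w.length ≤ n := by
  have hne : {m : ℕ∞ | ∃ w : G.Walk u v, w.AvoidsInternally X ∧ (w.length : ℕ∞) = m}.Nonempty := by
    by_contra hemp
    rw [Set.not_nonempty_iff_eq_empty] at hemp
    rw [avoidDist, hemp, sInf_empty] at h
    exact (lt_irrefl _ (lt_of_le_of_lt h (by exact_mod_cast lt_top_iff_ne_top.2 (by simp)))).elim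
  have hmem := csInf_mem hne
  obtain ⟨w, hw, hlen⟩ := hmem
  refine ⟨w, hw, ?_⟩
  have : (w.length : ℕ∞) ≤ (n : ℕ∞) := by rw [hlen]; exact h
  exact_mod_cast this

/-- Split a walk at the first vertex belonging to `R`. -/
lemma split_first {V : Type*} {G : SimpleGraph V} (R : Set V) :
    ∀ {a b : V} (w : G.Walk a b), (∃ x ∈ w.support, x ∈ R) →
    ∃ v, v ∈ R ∧ ∃ p : G.Walk a v, ∃ q : G.Walk v b,
      p.length + q.length = w.length ∧ ∀ x ∈ p.support.dropLast, x ∉ R := by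
  intro a b w
  induction w with
  | nil =>
    rintro ⟨x, hx, hxR⟩
    simp only [SimpleGraph.Walk.support_nil, List.mem_singleton] at hx
    subst hx
    exact ⟨x, hxR, .nil, .nil, by simp, by simp⟩
  | @cons a a' b h' w' ih =>
    rintro ⟨x, hx, hxR⟩
    by_cases haR : a ∈ R
    · exact ⟨a, haR, .nil, .cons h' w', by simp, by simp⟩
    · have hx' : x ∈ w'.support := by
        rcases List.mem_cons.1 (by simpa using hx) with rfl | h
        · exact absurd hxR haR
        · exact h
      obtain ⟨v, hvR, p', q', hlen, hav⟩ := ih ⟨x, hx', hxR⟩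
      refine ⟨v, hvR, .cons h' p', q', by simp only [SimpleGraph.Walk.length_cons]; omega, ?_⟩
      intro y hy
      have hsupp : (SimpleGraph.Walk.cons h' p').support = a :: p'.support :=
        SimpleGraph.Walk.support_cons h' p'
      rw [hsupp, List.dropLast_cons_of_ne_nil (SimpleGraph.Walk.support_ne_nil p')] at hy
      rcases List.mem_cons.1 hy with rfl | hy'
      · exact haR
      · exact hav y hy'

/-- Key uniformity property of a uniform water lily `(R, C)` of radius
`2r` and depth `r`: if `C` is `2r`-scattered in `G − R` (at most one element of `C`
reaches any vertex `u ∉ R` by a walk of length `≤ 2r` avoiding `R` entirely) and all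
centres have the same `r`-projection profile onto `R`, then any vertex `s` within
distance `r` (in `G`) of two distinct centres is within distance `r` of every centre. -/
theorem waterLily_uniformity {V : Type*} [Fintype V]
    (G : SimpleGraph V) (r : ℕ) (R C : Set V) (hdisj : Disjoint R C)
    (hscat : ∀ u : V, u ∉ R →
      {c : V | c ∈ C ∧
        ∃ w : G.Walk c u, w.length ≤ 2 * r ∧ ∀ x ∈ w.support, x ∉ R}.Subsingleton)
    (hunif : ∀ c ∈ C, ∀ c' ∈ C, ∀ v ∈ R, projProfile G R r c v = projProfile G R r c' v)
    (s c₁ c₂ : V) (hc₁ : c₁ ∈ C) (hc₂ : c₂ ∈ C) (hne : c₁ ≠ c₂)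
    (h₁ : ∃ w : G.Walk s c₁, w.length ≤ r) (h₂ : ∃ w : G.Walk s c₂, w.length ≤ r) :
    ∀ c ∈ C, ∃ w : G.Walk s c, w.length ≤ r := by
  obtain ⟨w₁, hw₁⟩ := h₁
  obtain ⟨w₂, hw₂⟩ := h₂
  -- Key step: if some short walk from `s` to a centre meets `R`, we win.
  have key : ∀ c₀ ∈ C, (∃ w : G.Walk s c₀, w.length ≤ r ∧ ∃ x ∈ w.support, x ∈ R) →
      ∀ c ∈ C, ∃ w : G.Walk s c, w.length ≤ r := by
    rintro c₀ hc₀ ⟨w, hwr, hmeet⟩ c hc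
    have hmeet' : ∃ x ∈ w.reverse.support, x ∈ R := by
      simpa [SimpleGraph.Walk.support_reverse] using hmeet
    obtain ⟨v, hvR, p, q, hsum, hav⟩ := split_first R w.reverse hmeet'
    have hsum' : p.length + q.length = w.length := by
      simpa using hsum
    have hpAvoid : p.AvoidsInternally R := by
      intro x hx
      rw [tail_dropLast_eq] at hx
      exact hav x (List.mem_of_mem_tail hx)
    have h1 : avoidDist G R c₀ v ≤ (p.length : ℕ∞) := avoidDist_le p hpAvoid
    have hplr : (p.length : ℕ∞) ≤ (r : ℕ∞) := by
      exact_mod_cast le_trans (by omega : p.length ≤ w.length) hwr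
    have h2 : avoidDist G R c₀ v ≤ (r : ℕ∞) := le_trans h1 hplr
    have hpp : projProfile G R r c v ≤ (p.length : ℕ∞) := by
      rw [hunif c hc c₀ hc₀ v hvR, projProfile, if_pos h2]
      exact h1
    have h3 : avoidDist G R c v ≤ (r : ℕ∞) := by
      by_contra hlt
      rw [projProfile, if_neg hlt] at hpp
      exact ENat.coe_ne_top p.length (top_le_iff.1 hpp)
    rw [projProfile, if_pos h3] at hpp
    obtain ⟨wc, _, hwc⟩ := exists_walk_of_avoidDist_le hpp
    refine ⟨q.reverse.append wc.reverse, ?_⟩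
    simp only [SimpleGraph.Walk.length_append, SimpleGraph.Walk.length_reverse]
    omega
  by_cases hm₁ : ∃ x ∈ w₁.support, x ∈ R
  · exact key c₁ hc₁ ⟨w₁, hw₁, hm₁⟩
  by_cases hm₂ : ∃ x ∈ w₂.support, x ∈ R
  · exact key c₂ hc₂ ⟨w₂, hw₂, hm₂⟩
  -- Neither walk meets `R`: then `c₁` and `c₂` both reach `c₂` avoiding `R`, contradiction.
  push_neg at hm₁ hm₂
  have hc₂R : c₂ ∉ R := fun h => Set.disjoint_left.1 hdisj h hc₂
  have hmem₁ : c₁ ∈ {c : V | c ∈ C ∧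
      ∃ w : G.Walk c c₂, w.length ≤ 2 * r ∧ ∀ x ∈ w.support, x ∉ R} := by
    refine ⟨hc₁, w₁.reverse.append w₂, ?_, ?_⟩
    · simp only [SimpleGraph.Walk.length_append, SimpleGraph.Walk.length_reverse]
      omega
    · intro x hx
      rw [SimpleGraph.Walk.mem_support_append_iff] at hx
      rcases hx with hx | hx
      · exact hm₁ x (by simpa [SimpleGraph.Walk.support_reverse] using hx)
      · exact hm₂ x hx
  have hmem₂ : c₂ ∈ {c : V | c ∈ C ∧
      ∃ w : G.Walk c c₂, w.length ≤ 2 * r ∧ ∀ x ∈ w.support, x ∉ R} := by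
    refine ⟨hc₂, .nil, by simp, ?_⟩
    intro x hx
    simp only [SimpleGraph.Walk.support_nil, List.mem_singleton] at hx
    subst hx; exact hc₂R
  exact (hne (hscat c₂ hc₂R hmem₁ hmem₂)).elim
end

section
/- Let G be a finite simple graph, r, λ, μ natural numbers, and R, W, I sets of vertices of G such that |N^r_G[w] ∩ R| ≥ λ for every w ∈ W and |N^r_G[ρ] ∩ I| ≤ μ for every ρ ∈ R. Then λ·|I ∩ W| ≤ μ·|R|. (In particular, if every vertex of the pads of a water lily has at least c roots within distance r, then any (r,c)-scattered set meets the pads in at most |R| vertices, and any set obeying upper constraint μ at the roots meets the pads in at most (μ/λ)·|R| vertices.) -/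
/-- If every `w ∈ W` has at least `λ` elements of `R` within distance
`r`, and every `ρ ∈ R` has at most `μ` elements of `I` within distance `r`, then
`λ·|I ∩ W| ≤ μ·|R|`. -/
theorem counting_scattered_in_pads {V : Type*} [Fintype V]
    (G : SimpleGraph V) (r lam mu : ℕ) (R W I : Set V)
    (hW : ∀ w ∈ W, lam ≤ ({u : V | ∃ p : G.Walk u w, p.length ≤ r} ∩ R).ncard)
    (hR : ∀ ρ ∈ R, ({u : V | ∃ p : G.Walk u ρ, p.length ≤ r} ∩ I).ncard ≤ mu) :
    lam * (I ∩ W).ncard ≤ mu * R.ncard := by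
  classical
  set rel : V → V → Prop := fun u v => ∃ p : G.Walk u v, p.length ≤ r with hrel
  have hsymm : ∀ u v, rel u v ↔ rel v u := by
    intro u v
    constructor <;> rintro ⟨p, hp⟩ <;> exact ⟨p.reverse, by simpa using hp⟩
  set A : Finset V := (I ∩ W).toFinset with hA
  set B : Finset V := R.toFinset with hB
  have hAcard : (I ∩ W).ncard = A.card := Set.ncard_eq_toFinset_card' _
  have hBcard : R.ncard = B.card := Set.ncard_eq_toFinset_card' _
  have hfilt : ∀ w : V, ({u : V | rel u w} ∩ R).ncard
      = (B.filter (fun ρ => rel ρ w)).card := by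
    intro w
    rw [Set.ncard_eq_toFinset_card']
    congr 1
    ext u
    simp [hB, and_comm]
  have hfilt2 : ∀ ρ : V, (A.filter (fun w => rel w ρ)).card
      ≤ ({u : V | rel u ρ} ∩ I).ncard := by
    intro ρ
    rw [Set.ncard_eq_toFinset_card']
    apply Finset.card_le_card
    intro u hu
    simp only [hA, Finset.mem_filter, Set.mem_toFinset, Set.mem_inter_iff] at hu ⊢
    exact ⟨hu.2, hu.1.1⟩
  have key : ∑ w ∈ A, (B.filter (fun ρ => rel ρ w)).card
      = ∑ ρ ∈ B, (A.filter (fun w => rel w ρ)).card := by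
    simp only [Finset.card_filter]
    rw [Finset.sum_comm]
    apply Finset.sum_congr rfl
    intro ρ _
    apply Finset.sum_congr rfl
    intro w _
    simp [hsymm ρ w]
  have h1 : lam * A.card ≤ ∑ w ∈ A, (B.filter (fun ρ => rel ρ w)).card := by
    calc lam * A.card = ∑ _w ∈ A, lam := by rw [Finset.sum_const, smul_eq_mul, mul_comm]
    _ ≤ _ := by
        apply Finset.sum_le_sum
        intro w hw
        rw [← hfilt w]
        exact hW w (by simpa [hA, Set.mem_toFinset] using (Set.mem_toFinset.mp hw).2)
  have h2 : ∑ ρ ∈ B, (A.filter (fun w => rel w ρ)).card ≤ mu * B.card := by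
    calc ∑ ρ ∈ B, (A.filter (fun w => rel w ρ)).card ≤ ∑ _ρ ∈ B, mu := by
          apply Finset.sum_le_sum
          intro ρ hρ
          exact (hfilt2 ρ).trans (hR ρ (Set.mem_toFinset.mp hρ))
    _ = mu * B.card := by rw [Finset.sum_const, smul_eq_mul, mul_comm]
  rw [hAcard, hBcard]
  exact h1.trans (key ▸ h2)
end

section
/- Let Ĝ be a finite simple graph, L ⊆ V(Ĝ), O = V(Ĝ) ∖ L, r ≥ 1 and k natural numbers. Let G' be obtained from Ĝ by adding new vertices b, a₁, a₂, connecting b to every vertex of O by a path of length r (each such connection using its own r−1 new internal vertices), connecting b to a₁ by a path of length r, and connecting a₁ to a₂ by a path of length r. Then G' has a total r-dominating set of size at most k+2 if and only if there is a set D̂ ⊆ V(Ĝ) of size at most k such that every vertex v ∈ L has some d ∈ D̂ with d ≠ v and d within distance r of v in Ĝ. -/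
/-- Graph obtained from `G` by adding new vertices `B` and, for each `p : P`, a fresh
path of length `len p` from `src p` to `dst p`: the path has `len p - 1` new internal
vertices (the pairs `⟨p, i⟩`); a connection of length `1` is just an edge. -/
def SimpleGraph.addPaths {V : Type*} (G : SimpleGraph V) (B P : Type*)
    (src dst : P → V ⊕ B) (len : P → ℕ) :
    SimpleGraph ((V ⊕ B) ⊕ (Σ p : P, Fin (len p - 1))) :=
  SimpleGraph.fromRel (fun x y =>
    (∃ u w, G.Adj u w ∧ x = .inl (.inl u) ∧ y = .inl (.inl w)) ∨
    (∃ p : P, len p = 1 ∧ x = .inl (src p) ∧ y = .inl (dst p)) ∨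
    (∃ p : P, ∃ i : Fin (len p - 1), (i : ℕ) = 0 ∧ x = .inl (src p) ∧ y = .inr ⟨p, i⟩) ∨
    (∃ p : P, ∃ i j : Fin (len p - 1), (i : ℕ) + 1 = (j : ℕ) ∧ x = .inr ⟨p, i⟩ ∧ y = .inr ⟨p, j⟩) ∨
    (∃ p : P, ∃ i : Fin (len p - 1), (i : ℕ) + 2 = len p ∧ x = .inr ⟨p, i⟩ ∧ y = .inl (dst p)))

/- New end-vertices for statement 7: `b = 0`, `a₁ = 1`, `a₂ = 2` (in `Fin 3`).
Paths (all of length `r`): for each `o ∈ O = Lᶜ` a path from `b` to `o`;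
a path from `b` to `a₁`; and a path from `a₁` to `a₂`. -/

/-- Sources of the added paths. -/
def src7 {V : Type*} [Fintype V] [DecidableEq V] (L : Finset V) :
    ({o : V // o ∈ Lᶜ} ⊕ Fin 2) → V ⊕ Fin 3
  | .inl _ => .inr 0      -- b–o paths start at b
  | .inr j => if j = 0 then .inr 0 else .inr 1  -- b–a₁ and a₁–a₂

/-- Targets of the added paths. -/
def dst7 {V : Type*} [Fintype V] [DecidableEq V] (L : Finset V) :
    ({o : V // o ∈ Lᶜ} ⊕ Fin 2) → V ⊕ Fin 3
  | .inl o => .inl o.1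
  | .inr j => if j = 0 then .inr 1 else .inr 2

namespace TDKernel

variable {V : Type*} [Fintype V] [DecidableEq V]

/-- projection to the original vertex set (when meaningful). -/
def proj (L : Finset V) (r : ℕ) :
    ((V ⊕ Fin 3) ⊕ (Σ _p : ({o : V // o ∈ Lᶜ} ⊕ Fin 2), Fin (r - 1))) → Option V
  | .inl (.inl u) => some u
  | .inl (.inr _) => none
  | .inr ⟨.inl o, _⟩ => some o.1
  | .inr ⟨.inr _, _⟩ => none

/-- potential: lower bound for distance to the set `L`. -/
def psi (L : Finset V) (r : ℕ) :
    ((V ⊕ Fin 3) ⊕ (Σ _p : ({o : V // o ∈ Lᶜ} ⊕ Fin 2), Fin (r - 1))) → ℕ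
  | .inl (.inl u) => if u ∈ L then 0 else 1
  | .inl (.inr j) => (j.val + 1) * r + 1
  | .inr ⟨.inl _, i⟩ => r - i
  | .inr ⟨.inr j, i⟩ => (j.val + 1) * r + 2 + i

/-- potential: lower bound for distance to `a₂`. -/
def phi (L : Finset V) (r : ℕ) :
    ((V ⊕ Fin 3) ⊕ (Σ _p : ({o : V // o ∈ Lᶜ} ⊕ Fin 2), Fin (r - 1))) → ℕ
  | .inl (.inl _) => 3*r
  | .inl (.inr j) => (2 - j.val) * r
  | .inr ⟨.inl _, i⟩ => 2*r + i + 1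
  | .inr ⟨.inr j, i⟩ => (2 - j.val) * r - 1 - i

variable (Ghat : SimpleGraph V) (L : Finset V) (r : ℕ)

local notation "G'" => Ghat.addPaths (Fin 3) ({o : V // o ∈ Lᶜ} ⊕ Fin 2)
                  (src7 L) (dst7 L) (fun _ => r)

lemma psi_adj (hr : 1 ≤ r) {x y} (h : (G').Adj x y) :
    psi L r x ≤ psi L r y + 1 ∧ psi L r y ≤ psi L r x + 1 := by
  rw [SimpleGraph.addPaths, SimpleGraph.fromRel_adj] at h
  obtain ⟨-, h | h⟩ := h <;>
  · obtain (⟨u, w, hadj, rfl, rfl⟩ | ⟨p, hlen, rfl, rfl⟩ | ⟨p, i, hi, rfl, rfl⟩ |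
        ⟨p, i, j, hij, rfl, rfl⟩ | ⟨p, i, hi, rfl, rfl⟩) := h
    · simp only [psi]
      split <;> split <;> omega
    · rcases p with o | j
      · simp only [src7, dst7, psi, if_neg (Finset.mem_compl.mp o.2)]
        omega
      · fin_cases j <;> simp [src7, dst7, psi] <;> omega
    · have hlt : (i : ℕ) < r - 1 := i.2
      rcases p with o | j
      · simp only [src7, psi]; omega
      · fin_cases j <;> simp [src7, psi] <;> omega
    · have hlt : (j : ℕ) < r - 1 := j.2
      have hlt' : (i : ℕ) < r - 1 := i.2
      rcases p with o | j'
      · simp only [psi]; omega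
      · simp only [psi]; omega
    · have hlt : (i : ℕ) < r - 1 := i.2
      rcases p with o | j
      · simp only [dst7, psi, if_neg (Finset.mem_compl.mp o.2)]
        omega
      · fin_cases j <;> simp [dst7, psi] <;> omega

lemma phi_adj (hr : 1 ≤ r) {x y} (h : (G').Adj x y) :
    phi L r x ≤ phi L r y + 1 ∧ phi L r y ≤ phi L r x + 1 := by
  rw [SimpleGraph.addPaths, SimpleGraph.fromRel_adj] at h
  obtain ⟨-, h | h⟩ := h <;>
  · obtain (⟨u, w, hadj, rfl, rfl⟩ | ⟨p, hlen, rfl, rfl⟩ | ⟨p, i, hi, rfl, rfl⟩ |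
        ⟨p, i, j, hij, rfl, rfl⟩ | ⟨p, i, hi, rfl, rfl⟩) := h
    · simp [phi]
    · rcases p with o | j
      · simp only [src7, dst7, phi, Fin.val_zero, Fin.val_one]; omega
      · fin_cases j <;> simp [src7, dst7, phi, Fin.val_zero, Fin.val_one, Fin.val_two] <;> omega
    · have hlt : (i : ℕ) < r - 1 := i.2
      rcases p with o | j
      · simp only [src7, phi, Fin.val_zero, Fin.val_one]; omega
      · fin_cases j <;> simp [src7, phi, Fin.val_zero, Fin.val_one, Fin.val_two] <;> omega
    · have hlt : (j : ℕ) < r - 1 := j.2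
      have hlt' : (i : ℕ) < r - 1 := i.2
      rcases p with o | j'
      · simp only [phi]; omega
      · simp only [phi]; omega
    · have hlt : (i : ℕ) < r - 1 := i.2
      rcases p with o | j
      · simp only [dst7, phi, Fin.val_zero, Fin.val_one]; omega
      · fin_cases j <;> simp [dst7, phi, Fin.val_zero, Fin.val_one, Fin.val_two] <;> omega

end TDKernel

namespace TDKernel

variable {V : Type*} [Fintype V] [DecidableEq V] (Ghat : SimpleGraph V) (L : Finset V) (r : ℕ)

local notation "G'" => Ghat.addPaths (Fin 3) ({o : V // o ∈ Lᶜ} ⊕ Fin 2)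
                  (src7 L) (dst7 L) (fun _ => r)

lemma psi_walk (hr : 1 ≤ r) {x y} (w : (G').Walk x y) :
    psi L r x ≤ psi L r y + w.length := by
  induction w with
  | nil => simp
  | cons h w ih =>
    have := (psi_adj Ghat L r hr h).1
    simp only [SimpleGraph.Walk.length_cons]
    omega

lemma phi_walk (hr : 1 ≤ r) {x y} (w : (G').Walk x y) :
    phi L r x ≤ phi L r y + w.length := by
  induction w with
  | nil => simp
  | cons h w ih =>
    have := (phi_adj Ghat L r hr h).1
    simp only [SimpleGraph.Walk.length_cons]
    omega

lemma psi_support (hr : 1 ≤ r) {x y} (w : (G').Walk x y) {z} (hz : z ∈ w.support) :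
    psi L r z ≤ psi L r y + w.length := by
  induction w with
  | nil =>
    simp only [SimpleGraph.Walk.support_nil, List.mem_singleton] at hz
    subst hz; simp
  | cons h w ih =>
    simp only [SimpleGraph.Walk.support_cons, List.mem_cons] at hz
    rcases hz with rfl | hz
    · have h1 := (psi_adj Ghat L r hr h).1
      have h2 := psi_walk Ghat L r hr w
      simp only [SimpleGraph.Walk.length_cons]; omega
    · have := ih hz
      simp only [SimpleGraph.Walk.length_cons]; omega

lemma proj_eq_none_of_phi (hr : 1 ≤ r) {x} (h : phi L r x ≤ 2*r) : proj L r x = none := by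
  rcases x with (u | j) | ⟨o | j, i⟩
  · exfalso; simp only [phi] at h; omega
  · rfl
  · exfalso; simp only [phi] at h; omega
  · rfl

lemma psi_ge_of_proj_none {x} (h : proj L r x = none) : r + 1 ≤ psi L r x := by
  rcases x with (u | j) | ⟨o | j, i⟩
  · exact absurd h (by simp [proj])
  · simp only [psi]
    have : 1 ≤ j.val + 1 := by omega
    calc r + 1 ≤ 1 * r + 1 := by omega
      _ ≤ (j.val + 1) * r + 1 := by
        have := Nat.mul_le_mul_right r this; omega
  · exact absurd h (by simp [proj])
  · simp only [psi]
    nlinarith [j.val.zero_le]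

lemma proj_adj (hr : 1 ≤ r) {x y} (h : (G').Adj x y) {a b : V}
    (ha : proj L r x = some a) (hb : proj L r y = some b) :
    a = b ∨ Ghat.Adj a b := by
  rw [SimpleGraph.addPaths, SimpleGraph.fromRel_adj] at h
  have core : ∀ (x y : (V ⊕ Fin 3) ⊕ (Σ _p : ({o : V // o ∈ Lᶜ} ⊕ Fin 2), Fin (r - 1)))
      (a b : V), ((∃ u w, Ghat.Adj u w ∧ x = .inl (.inl u) ∧ y = .inl (.inl w)) ∨
    (∃ p, r = 1 ∧ x = .inl (src7 L p) ∧ y = .inl (dst7 L p)) ∨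
    (∃ p, ∃ i : Fin (r - 1), (i : ℕ) = 0 ∧ x = .inl (src7 L p) ∧ y = .inr ⟨p, i⟩) ∨
    (∃ p, ∃ i j : Fin (r - 1), (i : ℕ) + 1 = (j : ℕ) ∧ x = .inr ⟨p, i⟩ ∧ y = .inr ⟨p, j⟩) ∨
    (∃ p, ∃ i : Fin (r - 1), (i : ℕ) + 2 = r ∧ x = .inr ⟨p, i⟩ ∧ y = .inl (dst7 L p))) →
      proj L r x = some a → proj L r y = some b → a = b ∨ Ghat.Adj a b := by
    clear ha hb h a b
    rintro x y a b (⟨u, w, hadj, rfl, rfl⟩ | ⟨p, hlen, rfl, rfl⟩ | ⟨p, i, hi, rfl, rfl⟩ |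
        ⟨p, i, j, hij, rfl, rfl⟩ | ⟨p, i, hi, rfl, rfl⟩) ha hb
    · simp only [proj, Option.some.injEq] at ha hb
      subst ha; subst hb; exact Or.inr hadj
    · rcases p with o | j
      · exact absurd ha (by simp [proj, src7])
      · fin_cases j <;> exact absurd ha (by simp [proj, src7])
    · rcases p with o | j
      · exact absurd ha (by simp [proj, src7])
      · fin_cases j <;> exact absurd ha (by simp [proj, src7])
    · rcases p with o | j
      · simp only [proj, Option.some.injEq] at ha hb
        subst ha; subst hb; exact Or.inl rfl
      · exact absurd ha (by simp [proj])
    · rcases p with o | j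
      · simp only [proj, dst7, Option.some.injEq] at ha hb
        subst ha; subst hb; exact Or.inl rfl
      · exact absurd ha (by simp [proj])
  obtain ⟨-, h | h⟩ := h
  · exact core x y a b h ha hb
  · exact (core y x b a h hb ha).imp Eq.symm (fun h => h.symm)

lemma proj_walk (hr : 1 ≤ r) (v₀ : V) {x y} (w : (G').Walk x y)
    (hsupp : ∀ z ∈ w.support, proj L r z ≠ none) :
    ∃ w' : Ghat.Walk ((proj L r x).getD v₀) ((proj L r y).getD v₀), w'.length ≤ w.length := by
  induction w with
  | nil => exact ⟨.nil, by simp⟩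
  | @cons x' y' z' h w ih =>
    have hx : proj L r x' ≠ none := hsupp _ (by simp)
    have hy : proj L r y' ≠ none := hsupp _ (by
      simp only [SimpleGraph.Walk.support_cons, List.mem_cons]
      exact Or.inr w.start_mem_support)
    obtain ⟨a, ha⟩ := Option.ne_none_iff_exists'.mp hx
    obtain ⟨b, hb⟩ := Option.ne_none_iff_exists'.mp hy
    obtain ⟨w', hw'⟩ := ih (fun z hz => hsupp _ (by
      simp only [SimpleGraph.Walk.support_cons, List.mem_cons]; exact Or.inr hz))
    rcases proj_adj Ghat L r hr h ha hb with heq | hadj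
    · refine ⟨w'.copy (by rw [ha, hb]; simp [heq]) rfl, ?_⟩
      simp only [SimpleGraph.Walk.length_copy, SimpleGraph.Walk.length_cons]
      omega
    · refine ⟨.cons (by rw [ha, hb]; simpa using hadj) w', ?_⟩
      simp only [SimpleGraph.Walk.length_cons]
      omega

end TDKernel

namespace TDKernel

variable {V : Type*} [Fintype V] [DecidableEq V] (Ghat : SimpleGraph V) (L : Finset V) (r : ℕ)

local notation "G'" => Ghat.addPaths (Fin 3) ({o : V // o ∈ Lᶜ} ⊕ Fin 2)
                  (src7 L) (dst7 L) (fun _ => r)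

/-- Embedding of the original graph. -/
def liftHom : Ghat →g (G') where
  toFun u := .inl (.inl u)
  map_rel' := by
    intro u w h
    exact (SimpleGraph.fromRel_adj _ _ _).mpr
      ⟨by simp [h.ne], Or.inl (Or.inl ⟨u, w, h, rfl, rfl⟩)⟩

lemma exists_prefix_walk (hr : 1 ≤ r) (p : {o : V // o ∈ Lᶜ} ⊕ Fin 2) :
    ∀ (n : ℕ) (h : n < r - 1),
    ∃ w : (G').Walk (.inl (src7 L p)) (.inr ⟨p, ⟨n, h⟩⟩), w.length = n + 1 := by
  intro n
  induction n with
  | zero =>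
    intro h
    refine ⟨.cons ((SimpleGraph.fromRel_adj _ _ _).mpr
      ⟨by simp, Or.inl (Or.inr (Or.inr (Or.inl ⟨p, ⟨0, h⟩, rfl, rfl, rfl⟩)))⟩) .nil, rfl⟩
  | succ n ih =>
    intro h
    obtain ⟨w, hw⟩ := ih (by omega)
    refine ⟨w.concat ((SimpleGraph.fromRel_adj _ _ _).mpr ⟨?_,
      Or.inl (Or.inr (Or.inr (Or.inr (Or.inl
        ⟨p, ⟨n, by show n < r - 1; omega⟩, ⟨n + 1, h⟩, rfl, rfl, rfl⟩))))⟩), ?_⟩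
    · simp [Fin.ext_iff]
    · exact (SimpleGraph.Walk.length_concat _ _).trans (by rw [hw])

lemma exists_full_walk (hr : 1 ≤ r) (p : {o : V // o ∈ Lᶜ} ⊕ Fin 2) :
    ∃ w : (G').Walk (.inl (src7 L p)) (.inl (dst7 L p)), w.length = r := by
  have hne : src7 L p ≠ dst7 L p := by
    rcases p with o | j
    · simp [src7, dst7]
    · fin_cases j <;> simp [src7, dst7]
  rcases eq_or_lt_of_le hr with h1 | h2
  · refine ⟨.cons ((SimpleGraph.fromRel_adj _ _ _).mpr
      ⟨by simpa using hne, Or.inl (Or.inr (Or.inl ⟨p, h1.symm, rfl, rfl⟩))⟩) .nil, Eq.trans (b := 1) rfl h1⟩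
  · obtain ⟨w, hw⟩ := exists_prefix_walk Ghat L r hr p (r - 2) (by omega)
    refine ⟨w.concat ((SimpleGraph.fromRel_adj _ _ _).mpr ⟨by simp,
      Or.inl (Or.inr (Or.inr (Or.inr (Or.inr ⟨p, ⟨r - 2, by show r - 2 < r - 1; omega⟩, by show r - 2 + 2 = r; omega, rfl, rfl⟩))))⟩), ?_⟩
    refine (SimpleGraph.Walk.length_concat _ _).trans ?_; rw [hw]
    omega

end TDKernel

namespace TDKernel

variable {V : Type*} [Fintype V] [DecidableEq V] (L : Finset V)

lemma src7_inl (o : {o : V // o ∈ Lᶜ}) : src7 L (.inl o) = .inr 0 := rfl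
lemma src7_inr0 : src7 L (.inr 0) = .inr 0 := rfl
lemma src7_inr1 : src7 L (.inr 1) = .inr 1 := rfl
lemma dst7_inr0 : dst7 L (.inr 0) = .inr 1 := rfl
lemma dst7_inr1 : dst7 L (.inr 1) = .inr 2 := rfl

end TDKernel


open TDKernel

/-- Let `G'` be obtained from `Ĝ` by adding new vertices `b, a₁, a₂`,
connecting `b` to every vertex of `O = V(Ĝ) ∖ L` by a path of length `r`, `b` to `a₁`
by a path of length `r`, and `a₁` to `a₂` by a path of length `r`. Then `G'` has a
total `r`-dominating set of size at most `k + 2` iff there is `D̂ ⊆ V(Ĝ)` of size at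
most `k` such that every `v ∈ L` has some `d ∈ D̂` with `d ≠ v` within distance `r`
of `v` in `Ĝ`. -/
theorem total_domination_kernel_back {V : Type*} [Fintype V] [DecidableEq V]
    (Ghat : SimpleGraph V) (L : Finset V) (r k : ℕ) (hr : 1 ≤ r) :
    (∃ D' : Set ((V ⊕ Fin 3) ⊕ (Σ _p : ({o : V // o ∈ Lᶜ} ⊕ Fin 2), Fin (r - 1))),
        D'.ncard ≤ k + 2 ∧
        ∀ x, ∃ d ∈ D', d ≠ x ∧
          ∃ w : (Ghat.addPaths (Fin 3) ({o : V // o ∈ Lᶜ} ⊕ Fin 2)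
                  (src7 L) (dst7 L) (fun _ => r)).Walk d x, w.length ≤ r) ↔
    (∃ Dhat : Set V, Dhat.ncard ≤ k ∧
        ∀ v ∈ L, ∃ d ∈ Dhat, d ≠ v ∧ ∃ w : Ghat.Walk d v, w.length ≤ r) := by
  constructor
  · rintro ⟨D', hcard, hdom⟩
    rcases L.eq_empty_or_nonempty with rfl | ⟨v₀, hv₀⟩
    · exact ⟨∅, by simp, by simp⟩
    obtain ⟨d₂, hd₂D, hd₂ne, w₂, hw₂⟩ := hdom (.inl (.inr 2))
    have hphia : phi L r (.inl (.inr 2)) = 0 := by simp [phi]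
    have hphi₂ : phi L r d₂ ≤ r := by
      have := phi_walk Ghat L r hr w₂
      omega
    obtain ⟨e, heD, hene, we, hwe⟩ := hdom d₂
    have hphie : phi L r e ≤ 2 * r := by
      have := phi_walk Ghat L r hr we
      omega
    have hd₂S : proj L r d₂ = none := proj_eq_none_of_phi L r hr (by omega)
    have heS : proj L r e = none := proj_eq_none_of_phi L r hr hphie
    set S : Set ((V ⊕ Fin 3) ⊕ (Σ _p : ({o : V // o ∈ Lᶜ} ⊕ Fin 2), Fin (r - 1))) :=
      {x | proj L r x = none} with hSdef
    have h2 : 2 ≤ (D' ∩ S).ncard := by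
      have h1 : 1 < (D' ∩ S).ncard :=
        (Set.one_lt_ncard (Set.toFinite _)).mpr ⟨e, ⟨heD, heS⟩, d₂, ⟨hd₂D, hd₂S⟩, hene⟩
      omega
    have h3 : (D' \ (D' ∩ S)).ncard + (D' ∩ S).ncard = D'.ncard :=
      Set.ncard_diff_add_ncard_of_subset Set.inter_subset_left (Set.toFinite _)
    rw [Set.diff_self_inter] at h3
    have hdiffcard : (D' \ S).ncard ≤ k := by omega
    refine ⟨(fun d => (proj L r d).getD v₀) '' (D' \ S),
      le_trans (Set.ncard_image_le (Set.toFinite _)) hdiffcard, ?_⟩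
    intro v hv
    obtain ⟨d, hdD, hdne, w, hw⟩ := hdom (.inl (.inl v))
    have hpsiv : psi L r (.inl (.inl v)) = 0 := by simp [psi, hv]
    have hsupp : ∀ z ∈ w.support, proj L r z ≠ none := by
      intro z hz hn
      have h4 := psi_support Ghat L r hr w hz
      have h5 := psi_ge_of_proj_none L r hn
      omega
    have hdS : d ∉ S := fun h => hsupp d w.start_mem_support h
    obtain ⟨w', hw'⟩ := proj_walk Ghat L r hr v₀ w hsupp
    refine ⟨(proj L r d).getD v₀, ⟨d, ⟨hdD, hdS⟩, rfl⟩, ?_, w', le_trans hw' hw⟩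
    rcases d with (u | j) | ⟨o | j, i⟩
    · simp only [proj, Option.getD_some]
      exact fun h => hdne (by rw [h])
    · exact absurd rfl hdS
    · simp only [proj, Option.getD_some]
      intro h
      exact (Finset.mem_compl.mp o.2) (h ▸ hv)
    · exact absurd rfl hdS
  · rintro ⟨Dhat, hcard, hdom⟩
    refine ⟨insert (Sum.inl (Sum.inr 0)) (insert (Sum.inl (Sum.inr 1))
      ((fun u => Sum.inl (Sum.inl u)) '' Dhat)), ?_, ?_⟩
    · refine le_trans (Set.ncard_insert_le _ _) ?_
      have i2 := Set.ncard_insert_le (Sum.inl (Sum.inr 1) :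
          (V ⊕ Fin 3) ⊕ (Σ _p : ({o : V // o ∈ Lᶜ} ⊕ Fin 2), Fin (r - 1)))
          ((fun u => Sum.inl (Sum.inl u)) '' Dhat)
      have i3 := Set.ncard_image_le (s := Dhat)
          (f := fun u => (Sum.inl (Sum.inl u) :
            (V ⊕ Fin 3) ⊕ (Σ _p : ({o : V // o ∈ Lᶜ} ⊕ Fin 2), Fin (r - 1))))
          (Set.toFinite _)
      omega
    intro x
    rcases x with (v | j) | ⟨p, i⟩
    · by_cases hv : v ∈ L
      · obtain ⟨d, hd, hdne, w, hw⟩ := hdom v hv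
        refine ⟨Sum.inl (Sum.inl d),
          Set.mem_insert_iff.mpr (Or.inr (Set.mem_insert_iff.mpr (Or.inr ⟨d, hd, rfl⟩))),
          by simpa using hdne, w.map (liftHom Ghat L r), ?_⟩
        refine (SimpleGraph.Walk.length_map _ _).trans_le ?_
        exact hw
      · obtain ⟨w, hw⟩ := exists_full_walk Ghat L r hr (Sum.inl ⟨v, Finset.mem_compl.mpr hv⟩)
        exact ⟨Sum.inl (Sum.inr 0), Set.mem_insert _ _, by simp, w, hw.le⟩
    · fin_cases j
      · -- b, dominated by a₁
        obtain ⟨w, hw⟩ := exists_full_walk Ghat L r hr (Sum.inr 0)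
        refine ⟨Sum.inl (Sum.inr 1),
          Set.mem_insert_iff.mpr (Or.inr (Set.mem_insert _ _)), by simp, ?_⟩
        refine ⟨(w.copy (congrArg Sum.inl (src7_inr0 L)) (congrArg Sum.inl (dst7_inr0 L))).reverse, ?_⟩
        rw [SimpleGraph.Walk.length_reverse, SimpleGraph.Walk.length_copy, hw]
      · -- a₁, dominated by b
        obtain ⟨w, hw⟩ := exists_full_walk Ghat L r hr (Sum.inr 0)
        refine ⟨Sum.inl (Sum.inr 0), Set.mem_insert _ _, by simp, ?_⟩
        refine ⟨w.copy (congrArg Sum.inl (src7_inr0 L)) (congrArg Sum.inl (dst7_inr0 L)), ?_⟩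
        rw [SimpleGraph.Walk.length_copy, hw]
      · -- a₂, dominated by a₁
        obtain ⟨w, hw⟩ := exists_full_walk Ghat L r hr (Sum.inr 1)
        refine ⟨Sum.inl (Sum.inr 1),
          Set.mem_insert_iff.mpr (Or.inr (Set.mem_insert _ _)), by simp, ?_⟩
        refine ⟨w.copy (congrArg Sum.inl (src7_inr1 L)) (congrArg Sum.inl (dst7_inr1 L)), ?_⟩
        rw [SimpleGraph.Walk.length_copy, hw]
    · have hilt : (i : ℕ) < r - 1 := i.isLt
      rcases p with o | j
      · obtain ⟨w, hw⟩ := exists_prefix_walk Ghat L r hr (Sum.inl o) i.val hilt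
        exact ⟨Sum.inl (Sum.inr 0), Set.mem_insert _ _, by simp, w, hw.trans_le (by omega)⟩
      · fin_cases j
        · obtain ⟨w, hw⟩ := exists_prefix_walk Ghat L r hr (Sum.inr 0) i.val hilt
          refine ⟨Sum.inl (Sum.inr 0), Set.mem_insert _ _, by simp, ?_⟩
          refine ⟨w.copy (congrArg Sum.inl (src7_inr0 L)) rfl, ?_⟩
          rw [SimpleGraph.Walk.length_copy]
          omega
        · obtain ⟨w, hw⟩ := exists_prefix_walk Ghat L r hr (Sum.inr 1) i.val hilt
          refine ⟨Sum.inl (Sum.inr 1),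
            Set.mem_insert_iff.mpr (Or.inr (Set.mem_insert _ _)), by simp, ?_⟩
          refine ⟨w.copy (congrArg Sum.inl (src7_inr1 L)) rfl, ?_⟩
          rw [SimpleGraph.Walk.length_copy]
          omega
end

section
/- Let Ĝ be a finite simple graph, L ⊆ V(Ĝ), O = V(Ĝ) ∖ L, r ≥ 1 and k natural numbers. Let G' be obtained from Ĝ by adding new vertices b, a₁, a₂, a₃ and connecting b to every vertex of O and to each of a₁, a₂, a₃ by a path of length r (each connection using its own r−1 new internal vertices). Then there exist sets D'₁, D'₂ ⊆ V(G') with |D'₁| + 2|D'₂| ≤ k+2 such that every vertex of V(G') ∖ D'₁ is within distance r in G' of some element of D'₂, if and only if there exist sets D̂₁, D̂₂ ⊆ V(Ĝ) with |D̂₁| + 2|D̂₂| ≤ k such that every vertex of L ∖ D̂₁ is within distance r in Ĝ of some element of D̂₂. -/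
/- New end-vertices for statement 9: `b = 0`, `a₁ = 1`, `a₂ = 2`, `a₃ = 3` (in `Fin 4`).
Paths (all of length `r`): from `b` to every `o ∈ O = Lᶜ` and from `b` to each
of `a₁, a₂, a₃`. -/

/-- Sources of the added paths: all start at `b`. -/
def src9 {V : Type*} [Fintype V] [DecidableEq V] (L : Finset V) :
    ({o : V // o ∈ Lᶜ} ⊕ Fin 3) → V ⊕ Fin 4 :=
  fun _ => .inr 0

/-- Targets of the added paths. -/
def dst9 {V : Type*} [Fintype V] [DecidableEq V] (L : Finset V) :
    ({o : V // o ∈ Lᶜ} ⊕ Fin 3) → V ⊕ Fin 4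
  | .inl o => .inl o.1
  | .inr j => .inr j.succ

section Aux
variable {V : Type*} [Fintype V] [DecidableEq V]
  (Ghat : SimpleGraph V) (L : Finset V) (r : ℕ)

local notation "Vert" => ((V ⊕ Fin 4) ⊕ (Σ _p : ({o : V // o ∈ Lᶜ} ⊕ Fin 3), Fin (r - 1)))
local notation "G'" => Ghat.addPaths (Fin 4) ({o : V // o ∈ Lᶜ} ⊕ Fin 3) (src9 L) (dst9 L) (fun _ => r)

/-- generic Lipschitz walk bound -/
lemma lipWalk {α : Type*} (G : SimpleGraph α) (f : α → ℕ)
    (hf : ∀ x y, G.Adj x y → f x ≤ f y + 1) :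
    ∀ {x y : α} (w : G.Walk x y), f x ≤ f y + w.length := by
  intro x y w
  induction w with
  | nil => simp
  | cons h w ih => have := hf _ _ h; simp only [SimpleGraph.Walk.length_cons]; omega

/-- distance-to-L lower bound function -/
def eL : Vert → ℕ
  | .inl (.inl v) => if v ∈ L then 0 else 1
  | .inl (.inr j) => if j = 0 then r + 1 else 2*r + 1
  | .inr ⟨.inl _, i⟩ => r - (i : ℕ)
  | .inr ⟨.inr _, i⟩ => (i : ℕ) + r + 2

lemma eL_adj (hr : 1 ≤ r) : ∀ x y : Vert, (G').Adj x y → eL L r x ≤ eL L r y + 1 := by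
  have key : ∀ x y : Vert,
      ((∃ u w, Ghat.Adj u w ∧ x = .inl (.inl u) ∧ y = .inl (.inl w)) ∨
      (∃ p, r = 1 ∧ x = .inl (src9 L p) ∧ y = .inl (dst9 L p)) ∨
      (∃ p, ∃ i : Fin (r - 1), (i : ℕ) = 0 ∧ x = .inl (src9 L p) ∧ y = .inr ⟨p, i⟩) ∨
      (∃ p, ∃ i j : Fin (r - 1), (i : ℕ) + 1 = (j : ℕ) ∧ x = .inr ⟨p, i⟩ ∧ y = .inr ⟨p, j⟩) ∨
      (∃ p, ∃ i : Fin (r - 1), (i : ℕ) + 2 = r ∧ x = .inr ⟨p, i⟩ ∧ y = .inl (dst9 L p))) →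
      eL L r x ≤ eL L r y + 1 ∧ eL L r y ≤ eL L r x + 1 := by
    rintro x y (⟨u, w, hadj, rfl, rfl⟩ | ⟨p, hr1, rfl, rfl⟩ | ⟨p, i, hi0, rfl, rfl⟩ |
      ⟨p, i, j, hij, rfl, rfl⟩ | ⟨p, i, hi, rfl, rfl⟩)
    · simp only [eL]; split <;> split <;> omega
    · rcases p with o | t
      · have ho : o.1 ∉ L := Finset.mem_compl.mp o.2
        simp [eL, src9, dst9, ho]; omega
      · have h1 : (Fin.succ t : Fin 4) ≠ 0 := Fin.succ_ne_zero t
        simp [eL, src9, dst9, h1]; omega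
    · rcases p with o | t <;> have h1 := i.isLt <;> simp [eL, src9] <;> omega
    · rcases p with o | t <;> have h1 := i.isLt <;> have h2 := j.isLt <;>
        simp only [eL] <;> omega
    · rcases p with o | t
      · have h1 := i.isLt
        have ho : o.1 ∉ L := Finset.mem_compl.mp o.2
        simp [eL, dst9, ho]; omega
      · have h1 := i.isLt
        have h2 : (Fin.succ t : Fin 4) ≠ 0 := Fin.succ_ne_zero t
        simp [eL, dst9, h2]; omega
  intro x y h
  simp only [SimpleGraph.addPaths, SimpleGraph.fromRel_adj] at h
  rcases h.2 with h' | h'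
  · exact (key x y h').1
  · exact (key y x h').2

/-- distance-to-`a_{t.succ}` lower bound function -/
def fT (t : Fin 3) : Vert → ℕ
  | .inl (.inl _) => 2*r
  | .inl (.inr j) => if j = 0 then r else if j = t.succ then 0 else 2*r
  | .inr ⟨.inl _, i⟩ => (i : ℕ) + 1 + r
  | .inr ⟨.inr t', i⟩ => if t' = t then r - 1 - (i : ℕ) else (i : ℕ) + 1 + r

lemma fT_adj (hr : 1 ≤ r) (t : Fin 3) :
    ∀ x y : Vert, (G').Adj x y → fT L r t x ≤ fT L r t y + 1 := by
  have key : ∀ x y : Vert,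
      ((∃ u w, Ghat.Adj u w ∧ x = .inl (.inl u) ∧ y = .inl (.inl w)) ∨
      (∃ p, r = 1 ∧ x = .inl (src9 L p) ∧ y = .inl (dst9 L p)) ∨
      (∃ p, ∃ i : Fin (r - 1), (i : ℕ) = 0 ∧ x = .inl (src9 L p) ∧ y = .inr ⟨p, i⟩) ∨
      (∃ p, ∃ i j : Fin (r - 1), (i : ℕ) + 1 = (j : ℕ) ∧ x = .inr ⟨p, i⟩ ∧ y = .inr ⟨p, j⟩) ∨
      (∃ p, ∃ i : Fin (r - 1), (i : ℕ) + 2 = r ∧ x = .inr ⟨p, i⟩ ∧ y = .inl (dst9 L p))) →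
      fT L r t x ≤ fT L r t y + 1 ∧ fT L r t y ≤ fT L r t x + 1 := by
    rintro x y (⟨u, w, hadj, rfl, rfl⟩ | ⟨p, hr1, rfl, rfl⟩ | ⟨p, i, hi0, rfl, rfl⟩ |
      ⟨p, i, j, hij, rfl, rfl⟩ | ⟨p, i, hi, rfl, rfl⟩)
    · simp [fT]
    · rcases p with o | t'
      · simp [fT, src9, dst9]; omega
      · have h1 : (Fin.succ t' : Fin 4) ≠ 0 := Fin.succ_ne_zero t'
        simp only [fT, src9, dst9, if_pos rfl, if_neg h1]
        by_cases ht : (Fin.succ t' : Fin 4) = Fin.succ t <;> simp [ht] <;> omega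
    · rcases p with o | t' <;> have h1 := i.isLt
      · simp [fT, src9]; omega
      · simp only [fT, src9, if_pos rfl]
        by_cases ht : t' = t <;> simp [ht] <;> omega
    · rcases p with o | t' <;> have h1 := i.isLt <;> have h2 := j.isLt
      · simp only [fT]; omega
      · simp only [fT]
        by_cases ht : t' = t <;> simp [ht] <;> omega
    · rcases p with o | t' <;> have h1 := i.isLt
      · simp [fT, dst9]; omega
      · have h2 : (Fin.succ t' : Fin 4) ≠ 0 := Fin.succ_ne_zero t'
        simp only [fT, dst9, if_neg h2]
        by_cases ht : t' = t
        · subst ht; simp; omega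
        · have ht' : (Fin.succ t' : Fin 4) ≠ Fin.succ t := by
            simpa using fun h => ht (Fin.succ_injective _ h)
          simp [ht, ht']; omega
  intro x y h
  simp only [SimpleGraph.addPaths, SimpleGraph.fromRel_adj] at h
  rcases h.2 with h' | h'
  · exact (key x y h').1
  · exact (key y x h').2

lemma eL_walk (hr : 1 ≤ r) {v : V} (hv : v ∈ L) {x : Vert}
    (w : (G').Walk x (.inl (.inl v))) : eL L r x ≤ w.length := by
  have := lipWalk _ (eL L r) (eL_adj Ghat L r hr) w
  simpa [eL, hv] using this

lemma fT_walk (hr : 1 ≤ r) (t : Fin 3) {x : Vert}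
    (w : (G').Walk x (.inl (.inr (Fin.succ t)))) : fT L r t x ≤ w.length := by
  have := lipWalk _ (fT L r t) (fT_adj Ghat L r hr t) w
  simpa [fT, Fin.succ_ne_zero t] using this

lemma projWalk (hr : 1 ≤ r) {v : V} (hv : v ∈ L) :
    ∀ n : ℕ, ∀ (x : Vert) (w : (G').Walk x (.inl (.inl v))), w.length = n → n ≤ r →
      (∀ u : V, x = .inl (.inl u) → ∃ wh : Ghat.Walk u v, wh.length ≤ n) ∧
      (∀ (o : {o : V // o ∈ Lᶜ}) (i : Fin (r - 1)), x = .inr ⟨.inl o, i⟩ →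
        ∃ wh : Ghat.Walk o.1 v, wh.length + (r - 1 - (i : ℕ)) ≤ n) := by
  intro n
  induction n with
  | zero =>
    intro x w hw _
    cases w with
    | nil =>
      constructor
      · intro u hu
        obtain rfl : v = u := by simpa using hu
        exact ⟨SimpleGraph.Walk.nil, by simp⟩
      · rintro o i h; exact absurd h (by simp)
    | cons h w => simp at hw
  | succ m ih =>
    intro x w hw hm
    cases w with
    | nil => simp at hw
    | @cons _ y _ hadj w' =>
      have hw' : w'.length = m := by simpa using hw
      have hm' : m ≤ r := by omega
      have hrel := hadj
      simp only [SimpleGraph.addPaths, SimpleGraph.fromRel_adj] at hrel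
      constructor
      · rintro u rfl
        rcases hrel.2 with
          (⟨u', w'', hG, hx, hy⟩ | ⟨p, hr1, hx, hy⟩ | ⟨p, i, hi0, hx, hy⟩ |
            ⟨p, i, j, hij, hx, hy⟩ | ⟨p, i, hi, hx, hy⟩) |
          (⟨u', w'', hG, hy, hx⟩ | ⟨p, hr1, hy, hx⟩ | ⟨p, i, hi0, hy, hx⟩ |
            ⟨p, i, j, hij, hy, hx⟩ | ⟨p, i, hi, hy, hx⟩)
        · -- Ĝ edge forward
          obtain rfl : u = u' := by simpa using hx
          subst hy
          obtain ⟨wh, hwh⟩ := (ih _ w' hw' hm').1 w'' rfl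
          exact ⟨SimpleGraph.Walk.cons hG wh, by simpa using Nat.succ_le_succ hwh⟩
        · simp [src9] at hx
        · simp [src9] at hx
        · simp at hx
        · simp at hx
        · -- Ĝ edge backward
          obtain rfl : u = w'' := by simpa using hx
          subst hy
          obtain ⟨wh, hwh⟩ := (ih _ w' hw' hm').1 u' rfl
          exact ⟨SimpleGraph.Walk.cons hG.symm wh, by simpa using Nat.succ_le_succ hwh⟩
        · -- y = src p = b : contradiction via eL
          subst hy
          have := eL_walk Ghat L r hr hv w'
          rw [hw'] at this
          simp [eL, src9] at this
          omega
        · -- y = src p = b : contradiction via eL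
          subst hy
          have := eL_walk Ghat L r hr hv w'
          rw [hw'] at this
          simp [eL, src9] at this
          omega
        · simp at hx
        · -- x = dst p, y = ⟨p, i⟩ with i+2 = r
          rcases p with o | t
          · obtain rfl : u = o.1 := by simpa [dst9] using hx
            subst hy
            obtain ⟨wh, hwh⟩ := (ih _ w' hw' hm').2 o i rfl
            have := i.isLt
            exact ⟨wh, by omega⟩
          · simp [dst9] at hx
      · rintro o i rfl
        have hilt := i.isLt
        rcases hrel.2 with
          (⟨u', w'', hG, hx, hy⟩ | ⟨p, hr1, hx, hy⟩ | ⟨p, i', hi0, hx, hy⟩ |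
            ⟨p, i', j, hij, hx, hy⟩ | ⟨p, i', hi, hx, hy⟩) |
          (⟨u', w'', hG, hy, hx⟩ | ⟨p, hr1, hy, hx⟩ | ⟨p, i', hi0, hy, hx⟩ |
            ⟨p, i', j, hij, hy, hx⟩ | ⟨p, i', hi, hy, hx⟩)
        · simp at hx
        · simp [src9] at hx
        · simp [src9] at hx
        · -- forward chain: x = ⟨p,i'⟩, y = ⟨p,j⟩ with i'+1 = j
          injection hx with hx'
          obtain ⟨h1, h2⟩ := Sigma.mk.inj_iff.mp hx'
          subst h1
          obtain rfl : i = i' := eq_of_heq h2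
          subst hy
          obtain ⟨wh, hwh⟩ := (ih _ w' hw' hm').2 o j rfl
          have := j.isLt
          exact ⟨wh, by omega⟩
        · -- x = ⟨p,i'⟩ with i'+2 = r, y = dst p
          injection hx with hx'
          obtain ⟨h1, h2⟩ := Sigma.mk.inj_iff.mp hx'
          subst h1
          obtain rfl : i = i' := eq_of_heq h2
          subst hy
          obtain ⟨wh, hwh⟩ := (ih _ w' hw' hm').1 o.1 (by simp [dst9])
          exact ⟨wh, by omega⟩
        · simp at hx
        · -- x = dst p : but x = inr, need p cases
          rcases p with o' | t <;> simp [dst9] at hx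
        · -- y = src p = b, x = ⟨p, 0⟩ : contradiction via eL
          subst hy
          have := eL_walk Ghat L r hr hv w'
          rw [hw'] at this
          simp [eL, src9] at this
          omega
        · -- backward chain: y = ⟨p,i'⟩, x = ⟨p,j⟩ with i'+1 = j
          injection hx with hx'
          obtain ⟨h1, h2⟩ := Sigma.mk.inj_iff.mp hx'
          subst h1
          obtain rfl : i = j := eq_of_heq h2
          subst hy
          obtain ⟨wh, hwh⟩ := (ih _ w' hw' hm').2 o i' rfl
          have := i'.isLt
          exact ⟨wh, by omega⟩
        · -- y = ⟨p,i'⟩, x = dst p : x is inr, contradiction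
          rcases p with o' | t <;> simp [dst9] at hx

lemma walk_to_internal (p : {o : V // o ∈ Lᶜ} ⊕ Fin 3) :
    ∀ (i : ℕ) (h : i < r - 1),
      ∃ w : (G').Walk (.inl (.inr 0)) (.inr ⟨p, ⟨i, h⟩⟩), w.length = i + 1 := by
  intro i
  induction i with
  | zero =>
    intro h
    have hadj : (G').Adj (.inl (.inr 0)) (.inr ⟨p, ⟨0, h⟩⟩) := by
      simp only [SimpleGraph.addPaths, SimpleGraph.fromRel_adj]
      exact ⟨by simp, Or.inl (Or.inr (Or.inr (Or.inl ⟨p, ⟨0, h⟩, rfl, rfl, rfl⟩)))⟩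
    exact ⟨SimpleGraph.Walk.cons hadj SimpleGraph.Walk.nil, by simp⟩
  | succ i ih =>
    intro h
    obtain ⟨w, hw⟩ := ih (by omega)
    have hadj : (G').Adj (.inr ⟨p, ⟨i, by omega⟩⟩) (.inr ⟨p, ⟨i + 1, h⟩⟩) := by
      simp only [SimpleGraph.addPaths, SimpleGraph.fromRel_adj]
      refine ⟨?_, Or.inl (Or.inr (Or.inr (Or.inr (Or.inl
        ⟨p, ⟨i, by omega⟩, ⟨i + 1, h⟩, rfl, rfl, rfl⟩))))⟩
      intro hcon
      injection hcon with hcon'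
      obtain ⟨-, h2⟩ := Sigma.mk.inj_iff.mp hcon'
      have : i = i + 1 := congrArg Fin.val (eq_of_heq h2)
      omega
    exact ⟨w.concat hadj, by rw [SimpleGraph.Walk.length_concat, hw]⟩

lemma walk_to_dst (hr : 1 ≤ r) (p : {o : V // o ∈ Lᶜ} ⊕ Fin 3) :
    ∃ w : (G').Walk (.inl (.inr 0)) (.inl (dst9 L p)), w.length = r := by
  rcases Nat.lt_or_ge r 2 with h2 | h2
  · have hr1 : r = 1 := by omega
    have hadj : (G').Adj (.inl (.inr 0)) (.inl (dst9 L p)) := by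
      simp only [SimpleGraph.addPaths, SimpleGraph.fromRel_adj]
      refine ⟨?_, Or.inl (Or.inr (Or.inl ⟨p, hr1, rfl, rfl⟩))⟩
      rcases p with o | t
      · simp [dst9, src9]
      · simp [dst9, src9, Ne.symm (Fin.succ_ne_zero t)]
    exact ⟨SimpleGraph.Walk.cons hadj SimpleGraph.Walk.nil, by simp [hr1]⟩
  · obtain ⟨w, hw⟩ := walk_to_internal Ghat L r p (r - 2) (by omega)
    have hadj : (G').Adj (.inr ⟨p, ⟨r - 2, by omega⟩⟩) (.inl (dst9 L p)) := by
      simp only [SimpleGraph.addPaths, SimpleGraph.fromRel_adj]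
      exact ⟨by simp, Or.inl (Or.inr (Or.inr (Or.inr (Or.inr
        ⟨p, ⟨r - 2, by omega⟩, (by omega : r - 2 + 2 = r), rfl, rfl⟩))))⟩
    exact ⟨w.concat hadj, by rw [SimpleGraph.Walk.length_concat, hw]; omega⟩

def homG : Ghat →g (G') :=
  ⟨fun v => .inl (.inl v), by
    intro a b h
    simp only [SimpleGraph.addPaths, SimpleGraph.fromRel_adj]
    exact ⟨by simp [h.ne], Or.inl (Or.inl ⟨a, b, h, rfl, rfl⟩)⟩⟩

def rho : Vert → V ⊕ Fin 4
  | .inl (.inl v) => .inl v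
  | .inl (.inr j) => .inr j
  | .inr ⟨.inl o, _⟩ => .inl o.1
  | .inr ⟨.inr t, _⟩ => .inr t.succ

lemma bwd_dir (hr : 1 ≤ r) (k : ℕ)
    (h : ∃ D₁ D₂ : Set V, D₁.ncard + 2 * D₂.ncard ≤ k ∧
        ∀ v ∈ L, v ∉ D₁ → ∃ d ∈ D₂, ∃ w : Ghat.Walk d v, w.length ≤ r) :
    ∃ D₁' D₂' : Set Vert, D₁'.ncard + 2 * D₂'.ncard ≤ k + 2 ∧
        ∀ x, x ∉ D₁' → ∃ d ∈ D₂', ∃ w : (G').Walk d x, w.length ≤ r := by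
  obtain ⟨D₁, D₂, hcost, hcov⟩ := h
  have hinj : Function.Injective (fun v => (Sum.inl (Sum.inl v) : Vert)) := by
    intro a b hab; simpa using hab
  refine ⟨(fun v => (Sum.inl (Sum.inl v) : Vert)) '' D₁,
    insert (Sum.inl (Sum.inr 0)) ((fun v => (Sum.inl (Sum.inl v) : Vert)) '' D₂), ?_, ?_⟩
  · have h1 := Set.ncard_image_of_injective D₁ hinj
    have h2 := Set.ncard_image_of_injective D₂ hinj
    have h3 := Set.ncard_insert_le (Sum.inl (Sum.inr 0) : Vert)
      ((fun v => (Sum.inl (Sum.inl v) : Vert)) '' D₂)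
    omega
  · intro x hx
    have hbmem : (Sum.inl (Sum.inr 0) : Vert) ∈
        insert (Sum.inl (Sum.inr 0)) ((fun v => (Sum.inl (Sum.inl v) : Vert)) '' D₂) :=
      Set.mem_insert _ _
    rcases x with (v | j) | ⟨p, i⟩
    · by_cases hvL : v ∈ L
      · by_cases hvD : v ∈ D₁
        · exact absurd (Set.mem_image_of_mem _ hvD) hx
        · obtain ⟨d, hd, wh, hwh⟩ := hcov v hvL hvD
          exact ⟨Sum.inl (Sum.inl d), Set.mem_insert_of_mem _ (Set.mem_image_of_mem _ hd),
            wh.map (homG Ghat L r), (SimpleGraph.Walk.length_map _ _).trans_le hwh⟩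
      · obtain ⟨w, hw⟩ := walk_to_dst Ghat L r hr (Sum.inl ⟨v, Finset.mem_compl.mpr hvL⟩)
        exact ⟨_, hbmem, w, hw.le⟩
    · by_cases hj : j = 0
      · subst hj
        exact ⟨_, hbmem, SimpleGraph.Walk.nil, by simp⟩
      · have hj1 : (j : ℕ) - 1 < 3 := by have := j.isLt; omega
        have hj0 : (j : ℕ) ≠ 0 := fun hc => hj (Fin.ext hc)
        have hjt : j = Fin.succ ⟨(j : ℕ) - 1, hj1⟩ := by
          apply Fin.ext
          simp [Fin.succ]
          omega
        rw [hjt]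
        obtain ⟨w, hw⟩ := walk_to_dst Ghat L r hr (Sum.inr ⟨(j : ℕ) - 1, hj1⟩)
        exact ⟨_, hbmem, w, hw.le⟩
    · obtain ⟨w, hw⟩ := walk_to_internal Ghat L r p i.val i.isLt
      refine ⟨_, hbmem, w, ?_⟩
      have := i.isLt
      omega

lemma fwd_dir (hr : 1 ≤ r) (k : ℕ)
    (h : ∃ D₁' D₂' : Set Vert, D₁'.ncard + 2 * D₂'.ncard ≤ k + 2 ∧
        ∀ x, x ∉ D₁' → ∃ d ∈ D₂', ∃ w : (G').Walk d x, w.length ≤ r) :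
    ∃ D₁ D₂ : Set V, D₁.ncard + 2 * D₂.ncard ≤ k ∧
        ∀ v ∈ L, v ∉ D₁ → ∃ d ∈ D₂, ∃ w : Ghat.Walk d v, w.length ≤ r := by
  classical
  obtain ⟨D₁', D₂', hcost, hcov⟩ := h
  set E₁ := rho L r '' D₁' with hE₁
  set E₂ := rho L r '' D₂' with hE₂
  refine ⟨{v | Sum.inl v ∈ E₁}, {v | Sum.inl v ∈ E₂}, ?_, ?_⟩
  · -- cost bound
    have key₁ : (Sum.inl '' {v | Sum.inl v ∈ E₁}) = E₁ ∩ Set.range Sum.inl := by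
      ext x
      constructor
      · rintro ⟨v, hv, rfl⟩; exact ⟨hv, ⟨v, rfl⟩⟩
      · rintro ⟨hx, v, rfl⟩; exact ⟨v, hx, rfl⟩
    have key₂ : (Sum.inl '' {v | Sum.inl v ∈ E₂}) = E₂ ∩ Set.range Sum.inl := by
      ext x
      constructor
      · rintro ⟨v, hv, rfl⟩; exact ⟨hv, ⟨v, rfl⟩⟩
      · rintro ⟨hx, v, rfl⟩; exact ⟨v, hx, rfl⟩
    have c1 : ({v | Sum.inl v ∈ E₁} : Set V).ncard = (E₁ ∩ Set.range Sum.inl).ncard := by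
      rw [← key₁, Set.ncard_image_of_injective _ Sum.inl_injective]
    have c2 : ({v | Sum.inl v ∈ E₂} : Set V).ncard = (E₂ ∩ Set.range Sum.inl).ncard := by
      rw [← key₂, Set.ncard_image_of_injective _ Sum.inl_injective]
    have d1 := Set.ncard_inter_add_ncard_diff_eq_ncard E₁ (Set.range Sum.inl) (Set.toFinite _)
    have d2 := Set.ncard_inter_add_ncard_diff_eq_ncard E₂ (Set.range Sum.inl) (Set.toFinite _)
    have e1 : E₁.ncard ≤ D₁'.ncard := Set.ncard_image_le (Set.toFinite _)
    have e2 : E₂.ncard ≤ D₂'.ncard := Set.ncard_image_le (Set.toFinite _)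
    rw [c1, c2]
    by_cases hb : (Sum.inl (Sum.inr 0) : Vert) ∈ D₂'
    · have hmem : (Sum.inr 0 : V ⊕ Fin 4) ∈ E₂ \ Set.range Sum.inl :=
        ⟨⟨_, hb, rfl⟩, by simp⟩
      have h1 : 1 ≤ (E₂ \ Set.range Sum.inl).ncard :=
        (Set.ncard_pos (Set.toFinite _)).mpr ⟨_, hmem⟩
      omega
    · have hreg : ∀ t : Fin 3,
          (Sum.inr (Fin.succ t) : V ⊕ Fin 4) ∈ (E₁ ∪ E₂) \ Set.range Sum.inl := by
        intro t
        refine ⟨?_, by simp⟩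
        by_cases ha : (Sum.inl (Sum.inr (Fin.succ t)) : Vert) ∈ D₁'
        · exact Or.inl ⟨_, ha, rfl⟩
        · obtain ⟨d, hd, w, hwlen⟩ := hcov _ ha
          have hft := fT_walk Ghat L r hr t w
          rcases d with (u | j) | ⟨o | t', i⟩
          · exfalso; simp [fT] at hft; omega
          · by_cases hj0 : j = 0
            · subst hj0; exact absurd hd hb
            · by_cases hjt : j = Fin.succ t
              · subst hjt; exact Or.inr ⟨_, hd, rfl⟩
              · exfalso; simp [fT, hj0, hjt] at hft; omega
          · exfalso; simp [fT] at hft; have := i.isLt; omega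
          · by_cases ht' : t' = t
            · subst ht'; exact Or.inr ⟨_, hd, rfl⟩
            · exfalso; simp [fT, ht'] at hft; have := i.isLt; omega
      have hsub : ({Sum.inr (Fin.succ 0), Sum.inr (Fin.succ 1), Sum.inr (Fin.succ 2)} :
          Set (V ⊕ Fin 4)) ⊆ (E₁ ∪ E₂) \ Set.range Sum.inl := by
        intro x hx
        simp only [Set.mem_insert_iff, Set.mem_singleton_iff] at hx
        rcases hx with rfl | rfl | rfl
        · exact hreg 0
        · exact hreg 1
        · exact hreg 2
      have hS3 : ({Sum.inr (Fin.succ 0), Sum.inr (Fin.succ 1), Sum.inr (Fin.succ 2)} :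
          Set (V ⊕ Fin 4)).ncard = 3 := by
        rw [Set.ncard_insert_of_notMem (by simp),
          Set.ncard_insert_of_notMem (by simp), Set.ncard_singleton]
      have h3 : 3 ≤ ((E₁ ∪ E₂) \ Set.range Sum.inl).ncard := by
        rw [← hS3]
        exact Set.ncard_le_ncard hsub (Set.toFinite _)
      have h4 : ((E₁ ∪ E₂) \ Set.range Sum.inl).ncard ≤
          (E₁ \ Set.range Sum.inl).ncard + (E₂ \ Set.range Sum.inl).ncard := by
        rw [Set.union_diff_distrib]
        exact Set.ncard_union_le _ _
      omega
  · -- coverage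
    intro v hvL hvD
    have hvD' : (Sum.inl (Sum.inl v) : Vert) ∉ D₁' := fun hmem => hvD ⟨_, hmem, rfl⟩
    obtain ⟨d, hd, w, hwlen⟩ := hcov _ hvD'
    have P := projWalk Ghat L r hr hvL w.length d w rfl hwlen
    rcases d with (u | j) | ⟨o | t, i⟩
    · obtain ⟨wh, hwh⟩ := P.1 u rfl
      exact ⟨u, ⟨_, hd, rfl⟩, wh, le_trans hwh hwlen⟩
    · exfalso
      have := eL_walk Ghat L r hr hvL w
      by_cases hj : j = 0 <;> simp [eL, hj] at this <;> omega
    · obtain ⟨wh, hwh⟩ := P.2 o i rfl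
      refine ⟨o.1, ⟨_, hd, rfl⟩, wh, ?_⟩
      omega
    · exfalso
      have := eL_walk Ghat L r hr hvL w
      simp [eL] at this
      omega

end Aux

/-- Let `G'` be obtained from `Ĝ` by adding new vertices
`b, a₁, a₂, a₃` and connecting `b` to every vertex of `O = V(Ĝ) ∖ L` and to each of
`a₁, a₂, a₃` by a path of length `r`. Then `G'` has an `r`-Roman dominating pair of
cost at most `k + 2` (covering all of `V(G')`) iff `Ĝ` has an `r`-Roman dominating
pair of cost at most `k` covering `L`. -/
theorem roman_domination_kernel_back {V : Type*} [Fintype V] [DecidableEq V]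
    (Ghat : SimpleGraph V) (L : Finset V) (r k : ℕ) (hr : 1 ≤ r) :
    (∃ D₁' D₂' : Set ((V ⊕ Fin 4) ⊕ (Σ _p : ({o : V // o ∈ Lᶜ} ⊕ Fin 3), Fin (r - 1))),
        D₁'.ncard + 2 * D₂'.ncard ≤ k + 2 ∧
        ∀ x, x ∉ D₁' → ∃ d ∈ D₂',
          ∃ w : (Ghat.addPaths (Fin 4) ({o : V // o ∈ Lᶜ} ⊕ Fin 3)
                  (src9 L) (dst9 L) (fun _ => r)).Walk d x, w.length ≤ r) ↔
    (∃ D₁ D₂ : Set V, D₁.ncard + 2 * D₂.ncard ≤ k ∧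
        ∀ v ∈ L, v ∉ D₁ → ∃ d ∈ D₂, ∃ w : Ghat.Walk d v, w.length ≤ r) := by
  exact ⟨fwd_dir Ghat L r hr k, bwd_dir Ghat L r hr k⟩
end

section
/- Let G be a finite simple graph, r ≥ 1, u a vertex of G, and let G' be obtained from G by attaching to u a pendant path of 2r new vertices a₁, …, a₂ᵣ (with edges u a₁ and a_i a_{i+1} for 1 ≤ i < 2r). If D' ⊆ V(G') satisfies |N^r_{G'}[x] ∩ D'| = 1 for every vertex x of G' (i.e. D' is an r-perfect code of G'), then u ∉ D' and D' contains exactly one of the vertices a₁, …, a₂ᵣ, namely some a_j with r ≤ j ≤ 2r. -/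
/- Statement 10: `G'` is obtained from `G` by attaching to `u` a pendant path of `2r`
new vertices `a₁, …, a_{2r}`, realized as a path of length `2r` from `u` to a single
new end-vertex (`B = Unit`, the vertex `a_{2r}`), with internal vertices `a₁, …, a_{2r-1}`
indexed by `Fin (2r - 1)`. -/

/-- The vertex `a_j` (for `1 ≤ j ≤ 2r`) of the attached pendant path. -/
def pendantVertex {V : Type*} (r : ℕ) (j : ℕ) :
    (V ⊕ Unit) ⊕ (Σ _p : Unit, Fin (2 * r - 1)) :=
  if h : j - 1 < 2 * r - 1 then .inr ⟨(), ⟨j - 1, h⟩⟩ else .inl (.inr ())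

namespace PCPP

/-- Potential function: distance-along-path coordinate. -/
def fpot {V : Type*} (r : ℕ) : ((V ⊕ Unit) ⊕ (Σ _p : Unit, Fin (2 * r - 1))) → ℕ
  | .inl (.inl _) => 0
  | .inl (.inr _) => 2 * r
  | .inr ⟨_, i⟩ => (i : ℕ) + 1

/-- The `j`-th vertex along the path, with `gvert r u 0 = u`. -/
def gvert {V : Type*} (r : ℕ) (u : V) (j : ℕ) :
    (V ⊕ Unit) ⊕ (Σ _p : Unit, Fin (2 * r - 1)) :=
  if j = 0 then .inl (.inl u) else pendantVertex r j

variable {V : Type*} (G : SimpleGraph V) (r : ℕ) (u : V)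

abbrev Gp : SimpleGraph ((V ⊕ Unit) ⊕ (Σ _p : Unit, Fin (2 * r - 1))) :=
  G.addPaths Unit Unit (fun _ => .inl u) (fun _ => .inr ()) (fun _ => 2 * r)

lemma gvert_zero : gvert r u 0 = .inl (.inl u) := rfl

lemma gvert_mid {j : ℕ} (h1 : 1 ≤ j) (h2 : j ≤ 2 * r - 1) :
    gvert r u j = .inr ⟨(), ⟨j - 1, by omega⟩⟩ := by
  rw [gvert, if_neg (by omega), pendantVertex, dif_pos (by omega)]

lemma gvert_last (hr : 1 ≤ r) : gvert r u (2 * r) = .inl (.inr ()) := by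
  rw [gvert, if_neg (by omega), pendantVertex, dif_neg (by omega)]

lemma gvert_pendant {j : ℕ} (h : 1 ≤ j) : gvert r u j = pendantVertex r j :=
  if_neg (by omega)

lemma fpot_gvert (hr : 1 ≤ r) {i : ℕ} (hi : i ≤ 2 * r) : fpot r (gvert r u i) = i := by
  rcases Nat.eq_zero_or_pos i with rfl | h1
  · rfl
  rcases Nat.lt_or_ge i (2 * r) with h2 | h2
  · rw [gvert_mid r u h1 (by omega)]
    simp only [fpot]
    omega
  · obtain rfl : i = 2 * r := by omega
    rw [gvert_last r u hr]
    rfl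

lemma g_inj (hr : 1 ≤ r) {i j : ℕ} (hi : i ≤ 2 * r) (hj : j ≤ 2 * r)
    (h : gvert r u i = gvert r u j) : i = j := by
  have := congrArg (fpot r) h
  rwa [fpot_gvert r u hr hi, fpot_gvert r u hr hj] at this

lemma adj_pot {x y} (h : (Gp G r u).Adj x y) :
    fpot r x ≤ fpot r y + 1 ∧ fpot r y ≤ fpot r x + 1 := by
  obtain ⟨-, h | h⟩ := (SimpleGraph.fromRel_adj _ x y).mp h <;>
  · rcases h with ⟨a, b, hab, rfl, rfl⟩ | ⟨p, hp, rfl, rfl⟩ | ⟨p, i, hi, rfl, rfl⟩ |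
      ⟨p, i, j, hij, rfl, rfl⟩ | ⟨p, i, hi, rfl, rfl⟩ <;>
    simp only [fpot] <;> beta_reduce at * <;> omega

lemma walk_pot {x y} (w : (Gp G r u).Walk x y) :
    fpot r x ≤ fpot r y + w.length ∧ fpot r y ≤ fpot r x + w.length := by
  induction w with
  | nil => simp
  | cons h w ih =>
    have h2 := adj_pot G r u h
    simp only [SimpleGraph.Walk.length_cons]
    omega

lemma adj_g (hr : 1 ≤ r) {i : ℕ} (hi : i < 2 * r) :
    (Gp G r u).Adj (gvert r u i) (gvert r u (i + 1)) := by
  refine (SimpleGraph.fromRel_adj _ _ _).mpr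
    ⟨fun h => by have := g_inj r u hr (by omega) (by omega) h; omega, Or.inl ?_⟩
  rcases Nat.eq_zero_or_pos i with rfl | hpos
  · exact Or.inr (Or.inr (Or.inl ⟨(), ⟨0, by show 0 < 2 * r - 1; omega⟩, rfl,
      gvert_zero r u, gvert_mid r u (by omega) (by omega)⟩))
  rcases Nat.lt_or_ge (i + 1) (2 * r) with h2 | h2
  · exact Or.inr (Or.inr (Or.inr (Or.inl ⟨(),
      ⟨i - 1, by show i - 1 < 2 * r - 1; omega⟩,
      ⟨i + 1 - 1, by show i + 1 - 1 < 2 * r - 1; omega⟩,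
      by show i - 1 + 1 = i + 1 - 1; omega,
      gvert_mid r u (by omega) (by omega), gvert_mid r u (by omega) (by omega)⟩)))
  · obtain rfl : i = 2 * r - 1 := by omega
    exact Or.inr (Or.inr (Or.inr (Or.inr ⟨(),
      ⟨2 * r - 1 - 1, by show 2 * r - 1 - 1 < 2 * r - 1; omega⟩,
      by show 2 * r - 1 - 1 + 2 = 2 * r; omega,
      gvert_mid r u (by omega) (by omega),
      by rw [show 2 * r - 1 + 1 = 2 * r by omega]; exact gvert_last r u hr⟩)))

lemma walk_g (hr : 1 ≤ r) (i : ℕ) : ∀ j, i ≤ j → j ≤ 2 * r →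
    ∃ w : (Gp G r u).Walk (gvert r u i) (gvert r u j), w.length = j - i := by
  intro j
  induction j with
  | zero =>
    intro h1 _
    obtain rfl : i = 0 := by omega
    exact ⟨.nil, by simp⟩
  | succ j ih =>
    intro h1 h2
    rcases Nat.lt_or_ge i (j + 1) with h | h
    · obtain ⟨w, hw⟩ := ih (by omega) (by omega)
      exact ⟨w.concat (adj_g G r u hr (by omega)), by
        rw [SimpleGraph.Walk.length_concat, hw]; omega⟩
    · obtain rfl : i = j + 1 := by omega
      exact ⟨.nil, by simp⟩

end PCPP


/-- If `G'` is obtained from `G` by attaching a pendant path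
`a₁, …, a_{2r}` to the vertex `u` and `D'` is an `r`-perfect code of `G'`, then
`u ∉ D'` and `D'` contains exactly one of `a₁, …, a_{2r}`, namely some `a_j` with
`r ≤ j ≤ 2r`. -/
theorem perfect_code_pendant_path {V : Type*} [Fintype V]
    (G : SimpleGraph V) (r : ℕ) (hr : 1 ≤ r) (u : V)
    (D' : Set ((V ⊕ Unit) ⊕ (Σ _p : Unit, Fin (2 * r - 1))))
    (hD' : ∀ x, ({y | ∃ w : (G.addPaths Unit Unit (fun _ => .inl u) (fun _ => .inr ())
        (fun _ => 2 * r)).Walk y x, w.length ≤ r} ∩ D').ncard = 1) :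
    (Sum.inl (Sum.inl u) : (V ⊕ Unit) ⊕ (Σ _p : Unit, Fin (2 * r - 1))) ∉ D' ∧
    (∃! j : ℕ, (1 ≤ j ∧ j ≤ 2 * r) ∧ pendantVertex (V := V) r j ∈ D') ∧
    (∀ j : ℕ, 1 ≤ j → j ≤ 2 * r → pendantVertex (V := V) r j ∈ D' → r ≤ j) := by
  classical
  open PCPP in
  -- walks of length ≤ r between nearby path vertices
  have hball2 : ∀ i k : ℕ, i ≤ 2 * r → k ≤ 2 * r → i - k ≤ r → k - i ≤ r →
      ∃ w : (Gp G r u).Walk (gvert r u i) (gvert r u k), w.length ≤ r := by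
    intro i k hi hk h1 h2
    rcases le_total i k with h | h
    · obtain ⟨w, hw⟩ := walk_g G r u hr i k h hk
      exact ⟨w, by omega⟩
    · obtain ⟨w, hw⟩ := walk_g G r u hr k i h hi
      exact ⟨w.reverse, by rw [SimpleGraph.Walk.length_reverse]; omega⟩
  -- the unique code vertex in the ball around a_{2r}
  obtain ⟨c, hc⟩ := Set.ncard_eq_one.mp (hD' (gvert r u (2 * r)))
  have hcmem : c ∈ ({y | ∃ w : (Gp G r u).Walk y (gvert r u (2 * r)), w.length ≤ r} ∩ D') := by
    rw [hc]; exact rfl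
  obtain ⟨⟨w, hw⟩, hcD⟩ := hcmem
  have hpot := walk_pot G r u w
  have hf2r : fpot r (gvert r u (2 * r)) = 2 * r := fpot_gvert r u hr le_rfl
  have hfc : r ≤ fpot r c := by omega
  -- identify c = gvert r u j with r ≤ j ≤ 2r
  obtain ⟨j, hjr, hj2r, hcj⟩ : ∃ j, r ≤ j ∧ j ≤ 2 * r ∧ c = gvert r u j := by
    match c with
    | .inl (.inl v) => simp only [fpot] at hfc; omega
    | .inl (.inr x) =>
      cases x
      exact ⟨2 * r, by omega, le_rfl, (gvert_last r u hr).symm⟩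
    | .inr ⟨p, i⟩ =>
      cases p
      have hlt := i.isLt
      simp only [fpot] at hfc
      refine ⟨(i : ℕ) + 1, by omega, by omega, ?_⟩
      rw [gvert_mid r u (by omega) (by omega)]
      simp
  rw [hcj] at hcD
  -- uniqueness: every path vertex in D' is gvert j
  have key : ∀ i, i ≤ 2 * r → gvert r u i ∈ D' → i = j := by
    intro i hi hiD
    obtain ⟨d, hd⟩ := Set.ncard_eq_one.mp (hD' (gvert r u ((i + j) / 2)))
    have h1 : gvert r u i ∈
        ({y | ∃ w : (Gp G r u).Walk y (gvert r u ((i + j) / 2)), w.length ≤ r} ∩ D') :=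
      ⟨hball2 i ((i + j) / 2) hi (by omega) (by omega) (by omega), hiD⟩
    have h2 : gvert r u j ∈
        ({y | ∃ w : (Gp G r u).Walk y (gvert r u ((i + j) / 2)), w.length ≤ r} ∩ D') :=
      ⟨hball2 j ((i + j) / 2) hj2r (by omega) (by omega) (by omega), hcD⟩
    rw [hd, Set.mem_singleton_iff] at h1 h2
    exact g_inj r u hr hi hj2r (h1.trans h2.symm)
  refine ⟨?_, ⟨j, ⟨⟨by omega, hj2r⟩, by rw [← gvert_pendant r u (by omega)]; exact hcD⟩,
      fun y hy => key y hy.1.2 (by rw [gvert_pendant r u hy.1.1]; exact hy.2)⟩, ?_⟩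
  · intro hu
    have h0 : gvert r u 0 ∈ D' := hu
    have := key 0 (by omega) h0
    omega
  · intro i h1 h2 hiD
    have := key i h2 (by rw [gvert_pendant r u h1]; exact hiD)
    omega
end

section
/- Let G be a finite simple graph, U ⊆ V(G), r a natural number, and let Ĝ be an induced subgraph of G with U ⊆ V(Ĝ) such that for all u, v ∈ U and all d ≤ r, u is within distance d of v in G if and only if u is within distance d of v in Ĝ. If x ∈ V(G) ∖ U and x' ∈ V(Ĝ) ∖ U satisfy π^r_{G,U}[x] = π^r_{Ĝ,U}[x'], then N^r_G[x] ∩ U = N^r_{Ĝ}[x'] ∩ U; in particular |N^r_G[x] ∩ I| = |N^r_{Ĝ}[x'] ∩ I| for every set I ⊆ U. -/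
/-- The closed `d`-neighbourhood of `v` in the subgraph of `G` induced on `S`:
vertices reachable from `v` by a walk of length at most `d` all of whose vertices lie
in `S`.  With `S = Set.univ` this is the closed `d`-neighbourhood in `G` itself. -/
def ballIn {V : Type*} (G : SimpleGraph V) (S : Set V) (d : ℕ) (v : V) : Set V :=
  {u : V | ∃ w : G.Walk u v, w.length ≤ d ∧ ∀ x ∈ w.support, x ∈ S}

/-- The `r`-projection profile `π^r_{H,X}[u]` evaluated at `v`, where `H` is the
subgraph of `G` induced on `S`: the minimum length of an `X`-avoiding walk from `u`
to `v` inside `S` if that minimum is at most `r`, and `∞` otherwise.  (`X`-avoiding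
means no internal vertex lies in `X`.)  With `S = Set.univ` this is the profile in
`G` itself. -/
noncomputable def profileIn {V : Type*} (G : SimpleGraph V) (S X : Set V) (r : ℕ)
    (u v : V) : ℕ∞ :=
  let d := sInf {n : ℕ∞ | ∃ w : G.Walk u v, (∀ x ∈ w.support, x ∈ S) ∧
    (∀ x ∈ w.support.tail.dropLast, x ∉ X) ∧ (w.length : ℕ∞) = n}
  if d ≤ (r : ℕ∞) then d else ⊤

private lemma dropLast_cons_mem {α : Type*} {a y : α} {l : List α}
    (h : y ∈ (a :: l).dropLast) : y = a ∨ y ∈ l.dropLast := by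
  cases l with
  | nil => simp at h
  | cons b t =>
    rw [List.dropLast_cons₂] at h
    exact List.mem_cons.mp h

/-- Decompose a walk from `x ∉ U` to `v ∈ U` at the first vertex of `U`. -/
private lemma decompose_walk {V : Type*} {G : SimpleGraph V} (U : Set V) {x v : V}
    (w : G.Walk x v) (hv : v ∈ U) :
    x ∉ U → ∃ u, u ∈ U ∧ ∃ (w1 : G.Walk x u) (w2 : G.Walk u v),
      w1.length + w2.length = w.length ∧
      (∀ y ∈ w1.support.tail.dropLast, y ∉ U) ∧
      (∀ y ∈ w1.support, y ∈ w.support) ∧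
      (∀ y ∈ w2.support, y ∈ w.support) := by
  induction w with
  | nil => intro hx; exact absurd hv hx
  | @cons a b c ha p ih =>
    intro hx
    by_cases hb : b ∈ U
    · refine ⟨b, hb, SimpleGraph.Walk.cons ha SimpleGraph.Walk.nil, p, ?_, ?_, ?_, ?_⟩
      · simp only [SimpleGraph.Walk.length_cons, SimpleGraph.Walk.length_nil]
        omega
      · intro y hy
        simp at hy
      · intro y hy
        simp only [SimpleGraph.Walk.support_cons, SimpleGraph.Walk.support_nil,
          List.mem_cons, List.mem_singleton] at hy
        simp only [SimpleGraph.Walk.support_cons, List.mem_cons]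
        rcases hy with h1 | h1 | h1
        · exact Or.inl h1
        · subst h1
          exact Or.inr p.start_mem_support
        · simp at h1
      · intro y hy
        simp only [SimpleGraph.Walk.support_cons]
        exact List.mem_cons_of_mem _ hy
    · obtain ⟨u, hu, p1, p2, hlen, hint, hs1, hs2⟩ := ih hv hb
      refine ⟨u, hu, SimpleGraph.Walk.cons ha p1, p2, ?_, ?_, ?_, ?_⟩
      · simp only [SimpleGraph.Walk.length_cons] at hlen ⊢
        omega
      · intro y hy
        simp only [SimpleGraph.Walk.support_cons, List.tail_cons] at hy
        rw [p1.support_eq_cons] at hy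
        rcases dropLast_cons_mem hy with h1 | h1
        · subst h1; exact hb
        · refine hint y ?_
          rw [p1.support_eq_cons]
          simpa using h1
      · intro y hy
        simp only [SimpleGraph.Walk.support_cons, List.mem_cons] at hy ⊢
        rcases hy with h1 | h1
        · exact Or.inl h1
        · exact Or.inr (hs1 y h1)
      · intro y hy
        simp only [SimpleGraph.Walk.support_cons]
        exact List.mem_cons_of_mem _ (hs2 y hy)

private lemma profileIn_eq {V : Type*} (G : SimpleGraph V) (S X : Set V) (r : ℕ)
    (u v : V) :
    profileIn G S X r u v =
      if sInf {n : ℕ∞ | ∃ w : G.Walk u v, (∀ x ∈ w.support, x ∈ S) ∧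
          (∀ x ∈ w.support.tail.dropLast, x ∉ X) ∧ (w.length : ℕ∞) = n} ≤ (r : ℕ∞)
      then sInf {n : ℕ∞ | ∃ w : G.Walk u v, (∀ x ∈ w.support, x ∈ S) ∧
          (∀ x ∈ w.support.tail.dropLast, x ∉ X) ∧ (w.length : ℕ∞) = n}
      else ⊤ := rfl

private lemma profileIn_le {V : Type*} (G : SimpleGraph V) (S X : Set V) (r : ℕ)
    {u v : V} (w : G.Walk u v) (hS : ∀ x ∈ w.support, x ∈ S)
    (hX : ∀ x ∈ w.support.tail.dropLast, x ∉ X) (hr : w.length ≤ r) :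
    profileIn G S X r u v ≤ (w.length : ℕ∞) := by
  have hmem : (w.length : ℕ∞) ∈ {n : ℕ∞ | ∃ w' : G.Walk u v, (∀ x ∈ w'.support, x ∈ S) ∧
      (∀ x ∈ w'.support.tail.dropLast, x ∉ X) ∧ (w'.length : ℕ∞) = n} := ⟨w, hS, hX, rfl⟩
  have hinf := sInf_le hmem
  rw [profileIn_eq, if_pos (le_trans hinf (by exact_mod_cast hr))]
  exact hinf

private lemma profileIn_exists {V : Type*} (G : SimpleGraph V) (S X : Set V) (r : ℕ)
    {u v : V} (h : profileIn G S X r u v ≤ (r : ℕ∞)) :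
    ∃ w : G.Walk u v, (∀ x ∈ w.support, x ∈ S) ∧
      (w.length : ℕ∞) ≤ profileIn G S X r u v := by
  rw [profileIn_eq] at h ⊢
  set T := {n : ℕ∞ | ∃ w' : G.Walk u v, (∀ x ∈ w'.support, x ∈ S) ∧
      (∀ x ∈ w'.support.tail.dropLast, x ∉ X) ∧ (w'.length : ℕ∞) = n} with hT
  by_cases hc : sInf T ≤ (r : ℕ∞)
  · rw [if_pos hc] at h ⊢
    have hne : sInf T ≠ ⊤ := fun heq => by
      rw [heq] at hc
      exact absurd (le_antisymm le_top hc) (by simp)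
    have hlt : sInf T < sInf T + 1 := (ENat.lt_add_one_iff hne).mpr le_rfl
    obtain ⟨n, hn, hnlt⟩ := sInf_lt_iff.mp hlt
    obtain ⟨w, hwS, _, hwl⟩ := hn
    refine ⟨w, hwS, ?_⟩
    rw [hwl]
    exact (ENat.lt_add_one_iff hne).mp hnlt
  · rw [if_neg hc] at h
    exact absurd (le_antisymm le_top h) (by simp)

/-- Let `Ĝ` be the subgraph of `G` induced on `S ⊇ U` preserving
distances up to `r` between vertices of `U`.  If `x ∈ V(G) ∖ U` and
`x' ∈ V(Ĝ) ∖ U` have `π^r_{G,U}[x] = π^r_{Ĝ,U}[x']`, then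
`N^r_G[x] ∩ U = N^r_Ĝ[x'] ∩ U`; in particular
`|N^r_G[x] ∩ I| = |N^r_Ĝ[x'] ∩ I|` for every `I ⊆ U`. -/
theorem equal_profiles_in_projection_kernel {V : Type*} [Fintype V]
    (G : SimpleGraph V) (U S : Set V) (r : ℕ) (hUS : U ⊆ S)
    (h1 : ∀ u ∈ U, ∀ v ∈ U, ∀ d ≤ r,
      ((∃ w : G.Walk u v, w.length ≤ d) ↔
       (∃ w : G.Walk u v, w.length ≤ d ∧ ∀ x ∈ w.support, x ∈ S)))
    (x x' : V) (hx : x ∉ U) (hx'S : x' ∈ S) (hx' : x' ∉ U)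
    (hprof : ∀ v ∈ U, profileIn G Set.univ U r x v = profileIn G S U r x' v) :
    ballIn G Set.univ r x ∩ U = ballIn G S r x' ∩ U ∧
    ∀ I : Set V, I ⊆ U →
      (ballIn G Set.univ r x ∩ I).ncard = (ballIn G S r x' ∩ I).ncard := by
  have hmain : ballIn G Set.univ r x ∩ U = ballIn G S r x' ∩ U := by
    apply Set.Subset.antisymm
    · rintro v ⟨⟨w, hwl, -⟩, hvU⟩
      obtain ⟨u, hu, w1, w2, hlen, hint, -, -⟩ := decompose_walk U w.reverse hvU hx
      rw [SimpleGraph.Walk.length_reverse] at hlen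
      have hw1r : w1.length ≤ r := by omega
      have hp1 : profileIn G Set.univ U r x u ≤ (w1.length : ℕ∞) :=
        profileIn_le G Set.univ U r w1 (fun _ _ => Set.mem_univ _) hint hw1r
      rw [hprof u hu] at hp1
      have hp1r : profileIn G S U r x' u ≤ (r : ℕ∞) :=
        le_trans hp1 (by exact_mod_cast hw1r)
      obtain ⟨w1', hS1, hl1⟩ := profileIn_exists G S U r hp1r
      have hl1' : w1'.length ≤ w1.length := by
        exact_mod_cast le_trans hl1 hp1
      have hw2r : w2.length ≤ r := by omega
      obtain ⟨w2', hl2, hS2⟩ := (h1 u hu v hvU w2.length hw2r).mp ⟨w2, le_refl _⟩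
      refine ⟨⟨(w1'.append w2').reverse, ?_, ?_⟩, hvU⟩
      · rw [SimpleGraph.Walk.length_reverse, SimpleGraph.Walk.length_append]
        omega
      · intro y hy
        rw [SimpleGraph.Walk.support_reverse, List.mem_reverse,
          SimpleGraph.Walk.support_append] at hy
        rcases List.mem_append.mp hy with h2 | h2
        · exact hS1 y h2
        · exact hS2 y (List.mem_of_mem_tail h2)
    · rintro v ⟨⟨w, hwl, hwS⟩, hvU⟩
      obtain ⟨u, hu, w1, w2, hlen, hint, hs1, hs2⟩ := decompose_walk U w.reverse hvU hx'
      rw [SimpleGraph.Walk.length_reverse] at hlen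
      have hrevS : ∀ y ∈ w.reverse.support, y ∈ S := by
        intro y hy
        rw [SimpleGraph.Walk.support_reverse, List.mem_reverse] at hy
        exact hwS y hy
      have hw1r : w1.length ≤ r := by omega
      have hp1 : profileIn G S U r x' u ≤ (w1.length : ℕ∞) :=
        profileIn_le G S U r w1 (fun y hy => hrevS y (hs1 y hy)) hint hw1r
      rw [← hprof u hu] at hp1
      have hp1r : profileIn G Set.univ U r x u ≤ (r : ℕ∞) :=
        le_trans hp1 (by exact_mod_cast hw1r)
      obtain ⟨w1', -, hl1⟩ := profileIn_exists G Set.univ U r hp1r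
      have hl1' : w1'.length ≤ w1.length := by
        exact_mod_cast le_trans hl1 hp1
      refine ⟨⟨(w1'.append w2).reverse, ?_, fun _ _ => Set.mem_univ _⟩, hvU⟩
      rw [SimpleGraph.Walk.length_reverse, SimpleGraph.Walk.length_append]
      omega
  refine ⟨hmain, fun I hI => ?_⟩
  have hIU : U ∩ I = I := Set.inter_eq_self_of_subset_right hI
  have h2 : ballIn G Set.univ r x ∩ I = ballIn G S r x' ∩ I := by
    rw [← hIU, ← Set.inter_assoc, ← Set.inter_assoc, hmain]
  rw [h2]
end
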